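/- Suppose I ⊆ [0, N−1] satisfies the Partial Order Property, let w_min = min_{x∈I} w(g_x), and let B = {i ∈ I : w(g_i) = w_min}. Then for every i ∈ B, the number of codewords of weight w_min in the coset C_i(I) satisfies A_{i, w_min}(I) ≥ 2^{|K_i|}, and consequently the total number of minimum-weight codewords satisfies A_{w_min}(I) = Σ_{i∈B} A_{i, w_min}(I) ≥ Σ_{i∈B} 2^{|K_i|}. -/

import Mathlib

noncomputable section
open scoped Classical
open Finset

/-- The 2×2 binary matrix [[1,0],[1,1]], as an ℕ-indexed function (zero outside range). -/
def G2 (a b : ℕ) : ZMod 2 :=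
  if a = 0 ∧ b = 0 then 1
  else if a = 1 ∧ b = 0 then 1
  else if a = 1 ∧ b = 1 then 1
  else 0

/-- `G n i c` is the (i,c) entry of the n-th Kronecker power over F₂ of [[1,0],[1,1]],
for row/column indices i, c ∈ [0, 2^n − 1] (standard row-major index flattening). -/
def G : ℕ → ℕ → ℕ → ZMod 2
  | 0 => fun i c => if i = 0 ∧ c = 0 then 1 else 0
  | n + 1 => fun i c => G2 (i / 2 ^ n) (c / 2 ^ n) * G n (i % 2 ^ n) (c % 2 ^ n)

/-- Row i of the polar transform G_N (N = 2^n), as a vector of its coordinates. -/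
def g (n i : ℕ) : ℕ → ZMod 2 := fun c => G n i c

/-- S_i ⊆ [0, n−1]: the support of the binary representation of i. -/
def S (n i : ℕ) : Finset ℕ := (Finset.range n).filter fun a => i.testBit a

/-- T_i = [0, n−1] \ S_i. -/
def T (n i : ℕ) : Finset ℕ := Finset.range n \ S n i

/-- Hamming weight of a vector whose coordinates are indexed by [0, 2^n − 1]. -/
def wt (n : ℕ) (v : ℕ → ZMod 2) : ℕ :=
  ((Finset.range (2 ^ n)).filter fun c => v c ≠ 0).card

/-- The index in [0, 2^n − 1] whose binary support is the set U ⊆ [0, n−1]. -/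
def idx (U : Finset ℕ) : ℕ := ∑ a ∈ U, 2 ^ a

/-- K_i = {j ∈ [i+1, N−1] : w(g_j) ≥ w(g_i ⊕ g_j) and w(g_i ⊕ g_j) = w(g_i)}. -/
def K (n i : ℕ) : Finset ℕ :=
  (Finset.Ico (i + 1) (2 ^ n)).filter fun j =>
    wt n (g n i + g n j) ≤ wt n (g n j) ∧ wt n (g n i + g n j) = wt n (g n i)

/-- One generating step of the partial order on [0, 2^n − 1]. -/
def poStep (n i j : ℕ) : Prop :=
  i < 2 ^ n ∧ j < 2 ^ n ∧
    (S n i ⊆ S n j ∨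
      ∃ a b, a ∈ S n i ∧ b ∉ S n i ∧ a < b ∧ S n j = insert b (S n i \ {a}))

/-- The partial order ⪯: reflexive–transitive closure of the generating relation. -/
def po (n : ℕ) : ℕ → ℕ → Prop := Relation.ReflTransGen (poStep n)

/-- Partial Order Property of an information set I ⊆ [0, 2^n − 1]. -/
def POP (n : ℕ) (I : Finset ℕ) : Prop :=
  ∀ i ∈ I, ∀ j, j < 2 ^ n → po n i j → j ∈ I

/-- The code C(I): all F₂-linear combinations (i.e. subset sums) of the rows g_i, i ∈ I. -/
def codewords (n : ℕ) (I : Finset ℕ) : Finset (ℕ → ZMod 2) :=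
  I.powerset.image fun H => ∑ h ∈ H, g n h

/-- A_w(I): the number of codewords of C(I) of Hamming weight w. -/
def A (n : ℕ) (I : Finset ℕ) (w : ℕ) : ℕ :=
  ((codewords n I).filter fun v => wt n v = w).card

/-- The coset C_i(I) = {g_i ⊕ ⊕_{h∈H} g_h : H ⊆ I \ [0,i]}. -/
def coset (n : ℕ) (I : Finset ℕ) (i : ℕ) : Finset (ℕ → ZMod 2) :=
  ((I.filter fun h => i < h).powerset).image fun H => g n i + ∑ h ∈ H, g n h

/-- A_{i,w}(I): the number of vectors of Hamming weight w in the coset C_i(I). -/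
def Ai (n : ℕ) (I : Finset ℕ) (i w : ℕ) : ℕ :=
  ((coset n I i).filter fun v => wt n v = w).card

-- chunk 1
lemma S_subset_range (n i : ℕ) : S n i ⊆ Finset.range n := Finset.filter_subset _ _

lemma mem_S {n i a : ℕ} : a ∈ S n i ↔ a < n ∧ i.testBit a := by simp [S]

lemma sum_range_two_pow (n : ℕ) : (∑ a ∈ Finset.range n, 2 ^ a) + 1 = 2 ^ n := by
  induction n with
  | zero => simp
  | succ n ih =>
    rw [Finset.sum_range_succ, pow_succ]
    omega

lemma idx_lt {n : ℕ} {U : Finset ℕ} (hU : U ⊆ Finset.range n) : idx U < 2 ^ n := by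
  have h1 : idx U ≤ ∑ a ∈ Finset.range n, 2 ^ a :=
    Finset.sum_le_sum_of_subset hU
  have := sum_range_two_pow n
  omega

lemma idx_mono {U V : Finset ℕ} (h : U ⊆ V) : idx U ≤ idx V :=
  Finset.sum_le_sum_of_subset h

lemma testBit_idx (U : Finset ℕ) (b : ℕ) : (idx U).testBit b = decide (b ∈ U) := by
  induction U using Finset.strongInduction with
  | _ U ih =>
    rcases U.eq_empty_or_nonempty with rfl | hne
    · simp [idx]
    · set M := U.max' hne with hM
      have hMU : M ∈ U := U.max'_mem hne
      have hrw : idx U = 2 ^ M + idx (U.erase M) := by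
        rw [idx, ← Finset.add_sum_erase _ _ hMU]; rfl
      have herase : U.erase M ⊆ Finset.range M := by
        intro a ha
        rw [Finset.mem_range]
        have := Finset.le_max' U a (Finset.mem_of_mem_erase ha)
        have := Finset.ne_of_mem_erase ha
        omega
      have hlt : idx (U.erase M) < 2 ^ M := idx_lt herase
      rcases lt_trichotomy b M with hb | rfl | hb
      · rw [hrw, Nat.testBit_two_pow_add_gt hb,
          ih (U.erase M) (Finset.erase_ssubset hMU)]
        simp only [decide_eq_decide]
        constructor
        · exact fun h => Finset.mem_of_mem_erase h
        · intro h; exact Finset.mem_erase.2 ⟨by omega, h⟩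
      · rw [hrw, Nat.testBit_two_pow_add_eq, Nat.testBit_lt_two_pow hlt]
        simp [hMU]
      · have : idx U < 2 ^ b := by
          have : 2 ^ (M + 1) ≤ 2 ^ b := Nat.pow_le_pow_right (by norm_num) hb
          have : 2 ^ M + 2 ^ M ≤ 2 ^ b := by rw [pow_succ] at this; omega
          omega
        rw [Nat.testBit_lt_two_pow this]
        have : b ∉ U := fun h => absurd (Finset.le_max' U b h) (by omega)
        simp [this]

lemma S_idx {n : ℕ} {U : Finset ℕ} (hU : U ⊆ Finset.range n) : S n (idx U) = U := by
  ext a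
  simp only [mem_S, testBit_idx, decide_eq_true_eq]
  constructor
  · exact fun h => h.2
  · intro h; exact ⟨Finset.mem_range.1 (hU h), h⟩

lemma idx_S {n i : ℕ} (hi : i < 2 ^ n) : idx (S n i) = i := by
  have hinj : Set.InjOn idx ((Finset.range n).powerset : Finset (Finset ℕ)) := by
    intro U hU V hV h
    rw [← S_idx (Finset.mem_powerset.1 hU), ← S_idx (Finset.mem_powerset.1 hV), h]
  have hcard : ((Finset.range n).powerset.image idx).card = 2 ^ n := by
    rw [Finset.card_image_of_injOn hinj, Finset.card_powerset, Finset.card_range]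
  have hsub : (Finset.range n).powerset.image idx ⊆ Finset.range (2 ^ n) := by
    intro x hx
    rcases Finset.mem_image.1 hx with ⟨U, hU, rfl⟩
    exact Finset.mem_range.2 (idx_lt (Finset.mem_powerset.1 hU))
  have heq : (Finset.range n).powerset.image idx = Finset.range (2 ^ n) :=
    Finset.eq_of_subset_of_card_le hsub (by rw [hcard, Finset.card_range])
  have : i ∈ (Finset.range n).powerset.image idx := heq ▸ Finset.mem_range.2 hi
  rcases Finset.mem_image.1 this with ⟨U, hU, rfl⟩
  rw [S_idx (Finset.mem_powerset.1 hU)]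

-- chunk 2 : row formula
lemma G2_big {a b : ℕ} (hb : 2 ≤ b) : G2 a b = 0 := by
  unfold G2
  have h0 : b ≠ 0 := by omega
  have h1 : b ≠ 1 := by omega
  simp [h0, h1]

lemma g_zero_of_big {n i c : ℕ} (hc : 2 ^ n ≤ c) : g n i c = 0 := by
  induction n generalizing i c with
  | zero =>
    have : c ≠ 0 := by omega
    simp [g, G, this]
  | succ n ih =>
    show G2 (i / 2 ^ n) (c / 2 ^ n) * G n (i % 2 ^ n) (c % 2 ^ n) = 0
    rcases lt_or_ge (c % 2 ^ n) (2 ^ n) with h | h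
    · have hdiv : 2 ≤ c / 2 ^ n := by
        rw [Nat.le_div_iff_mul_le (pow_pos (by norm_num) n)]
        rw [pow_succ] at hc; omega
      rw [G2_big hdiv, zero_mul]
    · rw [show G n (i % 2 ^ n) (c % 2 ^ n) = 0 from ih h, mul_zero]

lemma div_pow_eq_testBit {n x : ℕ} (hx : x < 2 ^ (n + 1)) :
    x / 2 ^ n = if x.testBit n then 1 else 0 := by
  have hbit := Nat.testBit_eq_decide_div_mod_eq (x := x) (i := n)
  have h2 : x / 2 ^ n < 2 := by
    rw [Nat.div_lt_iff_lt_mul (pow_pos (by norm_num) n)]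
    rw [pow_succ] at hx; omega
  obtain ⟨q, hq⟩ : ∃ q, x / 2 ^ n = q := ⟨_, rfl⟩
  rw [hq] at hbit h2 ⊢
  have : q = 0 ∨ q = 1 := by omega
  rcases this with h | h <;> rw [h] at hbit ⊢ <;> simp at hbit <;> simp [hbit]

lemma S_succ_subset_iff {n i c : ℕ} :
    S (n + 1) c ⊆ S (n + 1) i ↔
      (S n (c % 2 ^ n) ⊆ S n (i % 2 ^ n) ∧ (c.testBit n → i.testBit n)) := by
  constructor
  · intro h
    constructor
    · intro a ha
      obtain ⟨ha1, ha2⟩ := mem_S.1 ha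
      rw [Nat.testBit_mod_two_pow] at ha2
      simp [ha1] at ha2
      have := mem_S.1 (h (mem_S.2 ⟨by omega, ha2⟩))
      refine mem_S.2 ⟨ha1, ?_⟩
      rw [Nat.testBit_mod_two_pow]
      simp [ha1, this.2]
    · intro hc
      exact (mem_S.1 (h (mem_S.2 ⟨by omega, hc⟩))).2
  · rintro ⟨h1, h2⟩ a ha
    obtain ⟨ha1, ha2⟩ := mem_S.1 ha
    rcases lt_or_ge a n with han | han
    · have hmem : a ∈ S n (c % 2 ^ n) := by
        refine mem_S.2 ⟨han, ?_⟩
        rw [Nat.testBit_mod_two_pow]; simp [han, ha2]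
      obtain ⟨hb1, hb2⟩ := mem_S.1 (h1 hmem)
      rw [Nat.testBit_mod_two_pow] at hb2
      simp [hb1] at hb2
      exact mem_S.2 ⟨by omega, hb2⟩
    · have : a = n := by omega
      subst this
      exact mem_S.2 ⟨ha1, h2 ha2⟩

lemma g_eq {n i c : ℕ} (hi : i < 2 ^ n) (hc : c < 2 ^ n) :
    g n i c = if S n c ⊆ S n i then 1 else 0 := by
  induction n generalizing i c with
  | zero =>
    interval_cases i
    interval_cases c
    simp [g, G, S]
  | succ n ih =>
    have hin : i % 2 ^ n < 2 ^ n := Nat.mod_lt _ (pow_pos (by norm_num) n)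
    have hcn : c % 2 ^ n < 2 ^ n := Nat.mod_lt _ (pow_pos (by norm_num) n)
    have hmain : g (n + 1) i c =
        G2 (i / 2 ^ n) (c / 2 ^ n) * g n (i % 2 ^ n) (c % 2 ^ n) := rfl
    rw [hmain, ih hin hcn, div_pow_eq_testBit hi, div_pow_eq_testBit hc]
    by_cases hss : S n (c % 2 ^ n) ⊆ S n (i % 2 ^ n) <;>
      rcases Bool.eq_false_or_eq_true (c.testBit n) with hcb | hcb <;>
      rcases Bool.eq_false_or_eq_true (i.testBit n) with hib | hib <;>
      simp [G2, hcb, hib, hss, S_succ_subset_iff]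

-- chunk 3 : counting and weights
lemma g_one {n i c : ℕ} (hi : i < 2 ^ n) (hc : c < 2 ^ n) (h : S n c ⊆ S n i) :
    g n i c = 1 := by rw [g_eq hi hc, if_pos h]

lemma g_zero {n i c : ℕ} (hi : i < 2 ^ n) (hc : c < 2 ^ n) (h : ¬ S n c ⊆ S n i) :
    g n i c = 0 := by rw [g_eq hi hc, if_neg h]

lemma g_diag {n i : ℕ} (hi : i < 2 ^ n) : g n i i = 1 := g_one hi hi subset_rfl

lemma g_zero_of_lt {n i c : ℕ} (hi : i < 2 ^ n) (h : i < c) : g n i c = 0 := by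
  rcases lt_or_ge c (2 ^ n) with hc | hc
  · refine g_zero hi hc fun hss => ?_
    have := idx_mono hss
    rw [idx_S hi, idx_S hc] at this
    omega
  · exact g_zero_of_big hc

lemma card_filter_S {n : ℕ} (p : Finset ℕ → Prop) [DecidablePred p] :
    ((Finset.range (2 ^ n)).filter fun c => p (S n c)).card =
      ((Finset.range n).powerset.filter p).card := by
  apply Finset.card_bij' (fun c _ => S n c) (fun U _ => idx U)
  · intro c hc
    simp only [Finset.mem_filter, Finset.mem_range] at hc
    exact Finset.mem_filter.2 ⟨Finset.mem_powerset.2 (S_subset_range n c), hc.2⟩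
  · intro U hU
    simp only [Finset.mem_filter, Finset.mem_powerset] at hU
    refine Finset.mem_filter.2 ⟨Finset.mem_range.2 (idx_lt hU.1), ?_⟩
    rw [S_idx hU.1]; exact hU.2
  · intro c hc
    simp only [Finset.mem_filter, Finset.mem_range] at hc
    exact idx_S hc.1
  · intro U hU
    simp only [Finset.mem_filter, Finset.mem_powerset] at hU
    exact S_idx hU.1

lemma wt_eq_card {n : ℕ} (v : ℕ → ZMod 2) (p : Finset ℕ → Prop) [DecidablePred p]
    (h : ∀ c, c < 2 ^ n → (v c ≠ 0 ↔ p (S n c))) :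
    wt n v = ((Finset.range n).powerset.filter p).card := by
  rw [wt, ← card_filter_S p]
  congr 1
  apply Finset.filter_congr
  intro c hc
  simpa using h c (Finset.mem_range.1 hc)

lemma powerset_filter_subset {n : ℕ} {W : Finset ℕ} (hW : W ⊆ Finset.range n) :
    (Finset.range n).powerset.filter (fun U => U ⊆ W) = W.powerset := by
  ext V
  simp only [Finset.mem_filter, Finset.mem_powerset]
  exact ⟨fun h => h.2, fun h => ⟨h.trans hW, h⟩⟩

lemma wt_g {n i : ℕ} (hi : i < 2 ^ n) : wt n (g n i) = 2 ^ (S n i).card := by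
  rw [wt_eq_card (g n i) (fun U => U ⊆ S n i)
    (fun c hc => by rw [g_eq hi hc]; by_cases h : S n c ⊆ S n i <;> simp [h]),
    powerset_filter_subset (S_subset_range n i), Finset.card_powerset]

lemma powerset_inter (A B : Finset ℕ) : A.powerset ∩ B.powerset = (A ∩ B).powerset := by
  ext V
  simp only [Finset.mem_inter, Finset.mem_powerset, Finset.subset_inter_iff]

lemma wt_add_g {n i j : ℕ} (hi : i < 2 ^ n) (hj : j < 2 ^ n) :
    wt n (g n i + g n j) + 2 ^ ((S n i ∩ S n j).card) + 2 ^ ((S n i ∩ S n j).card)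
      = 2 ^ (S n i).card + 2 ^ (S n j).card := by
  have hwt : wt n (g n i + g n j) =
      ((Finset.range n).powerset.filter
        (fun U => ¬(U ⊆ S n i ↔ U ⊆ S n j))).card := by
    apply wt_eq_card
    intro c hc
    simp only [Pi.add_apply]
    rw [g_eq hi hc, g_eq hj hc]
    by_cases h1 : S n c ⊆ S n i <;> by_cases h2 : S n c ⊆ S n j <;> simp [h1, h2] <;> decide
  have hset : (Finset.range n).powerset.filter (fun U => ¬(U ⊆ S n i ↔ U ⊆ S n j)) =
      ((S n i).powerset ∪ (S n j).powerset) \ ((S n i).powerset ∩ (S n j).powerset) := by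
    ext V
    simp only [Finset.mem_filter, Finset.mem_powerset, Finset.mem_sdiff,
      Finset.mem_union, Finset.mem_inter, Finset.mem_powerset]
    constructor
    · rintro ⟨hV, h⟩
      constructor
      · by_contra hc; push_neg at hc; exact h (by tauto)
      · rintro ⟨h1, h2⟩; exact h (by tauto)
    · rintro ⟨h1, h2⟩
      refine ⟨?_, by tauto⟩
      rcases h1 with h | h
      · exact h.trans (S_subset_range n i)
      · exact h.trans (S_subset_range n j)
  have hinter : (S n i).powerset ∩ (S n j).powerset = (S n i ∩ S n j).powerset :=
    powerset_inter _ _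
  have hsub : (S n i).powerset ∩ (S n j).powerset ⊆ (S n i).powerset ∪ (S n j).powerset :=
    Finset.inter_subset_union
  have h1 := Finset.card_sdiff_add_card_eq_card hsub
  have h2 := Finset.card_union_add_card_inter (S n i).powerset (S n j).powerset
  rw [hwt, hset, hinter]
  rw [hinter] at h1 h2
  simp only [Finset.card_powerset] at h1 h2 ⊢
  omega

-- chunk 4 : char 2 facts, independence, monotonicity
lemma v_add_self (v : ℕ → ZMod 2) : v + v = 0 := by
  funext c
  simp only [Pi.add_apply, Pi.zero_apply]
  exact CharTwo.add_self_eq_zero _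

lemma sum_symmDiff_eq {α : Type*} [DecidableEq α] (M M' : Finset α) (f : α → (ℕ → ZMod 2)) :
    ∑ x ∈ (M \ M') ∪ (M' \ M), f x = (∑ x ∈ M, f x) + ∑ x ∈ M', f x := by
  rw [Finset.sum_union disjoint_sdiff_sdiff]
  have h1 : ∑ x ∈ M ∩ M', f x + ∑ x ∈ M \ M', f x = ∑ x ∈ M, f x :=
    Finset.sum_inter_add_sum_sdiff M M' f
  have h2 : ∑ x ∈ M' ∩ M, f x + ∑ x ∈ M' \ M, f x = ∑ x ∈ M', f x :=
    Finset.sum_inter_add_sum_sdiff M' M f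
  rw [Finset.inter_comm] at h2
  have h3 := v_add_self (∑ x ∈ M ∩ M', f x)
  rw [← h1, ← h2]
  abel_nf
  rw [two_smul]
  rw [show (∑ x ∈ M ∩ M', f x) + (∑ x ∈ M ∩ M', f x) = 0 from h3]
  abel

lemma sum_g_inj {n : ℕ} {M M' : Finset ℕ} (hM : ∀ x ∈ M, x < 2 ^ n)
    (hM' : ∀ x ∈ M', x < 2 ^ n) (h : (∑ h ∈ M, g n h) = ∑ h ∈ M', g n h) : M = M' := by
  by_contra hne
  have hD : ((M \ M') ∪ (M' \ M)).Nonempty := by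
    rw [Finset.nonempty_iff_ne_empty]
    intro hc
    rw [Finset.union_eq_empty] at hc
    rw [Finset.sdiff_eq_empty_iff_subset, Finset.sdiff_eq_empty_iff_subset] at hc
    exact hne (Finset.Subset.antisymm hc.1 hc.2)
  set D := (M \ M') ∪ (M' \ M) with hDdef
  have hzero : ∑ x ∈ D, g n x = 0 := by
    rw [hDdef, sum_symmDiff_eq, h, v_add_self]
  set d := D.max' hD with hd
  have hdD : d ∈ D := D.max'_mem hD
  have hdlt : d < 2 ^ n := by
    rcases Finset.mem_union.1 hdD with h' | h'
    · exact hM d (Finset.mem_sdiff.1 h').1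
    · exact hM' d (Finset.mem_sdiff.1 h').1
  have heval : (∑ x ∈ D, g n x) d = 0 := by rw [hzero]; rfl
  rw [Finset.sum_apply] at heval
  rw [← Finset.add_sum_erase _ _ hdD] at heval
  rw [g_diag hdlt] at heval
  have hrest : ∑ x ∈ D.erase d, g n x d = 0 := by
    apply Finset.sum_eq_zero
    intro x hx
    have hxD := Finset.mem_of_mem_erase hx
    have hxd : x ≠ d := Finset.ne_of_mem_erase hx
    have : x < 2 ^ n := by
      rcases Finset.mem_union.1 hxD with h' | h'
      · exact hM x (Finset.mem_sdiff.1 h').1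
      · exact hM' x (Finset.mem_sdiff.1 h').1
    have hxltd : x < d := lt_of_le_of_ne (Finset.le_max' D x hxD) hxd
    exact g_zero_of_lt this hxltd
  rw [hrest, add_zero] at heval
  exact one_ne_zero heval

-- quadrant lemmas
lemma g_succ_ll {n h c : ℕ} (hh : h < 2 ^ n) (hc : c < 2 ^ n) :
    g (n + 1) h c = g n h c := by
  show G2 (h / 2 ^ n) (c / 2 ^ n) * G n (h % 2 ^ n) (c % 2 ^ n) = _
  rw [Nat.div_eq_of_lt hh, Nat.div_eq_of_lt hc, Nat.mod_eq_of_lt hh, Nat.mod_eq_of_lt hc]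
  simp [G2]; rfl

lemma g_succ_lh {n h c : ℕ} (hh : h < 2 ^ n) :
    g (n + 1) h (2 ^ n + c) = 0 := by
  show G2 (h / 2 ^ n) ((2 ^ n + c) / 2 ^ n) * G n (h % 2 ^ n) ((2 ^ n + c) % 2 ^ n) = 0
  rw [Nat.div_eq_of_lt hh]
  have h2 : 1 ≤ (2 ^ n + c) / 2 ^ n := by
    apply Nat.le_div_iff_mul_le (pow_pos (by norm_num) n) |>.2
    omega
  rcases Nat.lt_or_ge ((2 ^ n + c) / 2 ^ n) 2 with h3 | h3
  · have : (2 ^ n + c) / 2 ^ n = 1 := by omega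
    rw [this]
    simp [G2]
  · rw [G2_big h3, zero_mul]

lemma g_succ_hl {n h c : ℕ} (hh : 2 ^ n ≤ h) (hh2 : h < 2 ^ (n + 1)) (hc : c < 2 ^ n) :
    g (n + 1) h c = g n (h - 2 ^ n) c := by
  show G2 (h / 2 ^ n) (c / 2 ^ n) * G n (h % 2 ^ n) (c % 2 ^ n) = _
  have hd : h / 2 ^ n = 1 := by
    apply Nat.div_eq_of_lt_le (by omega)
    rw [pow_succ] at hh2; omega
  have hm : h % 2 ^ n = h - 2 ^ n := by
    rw [Nat.mod_eq_sub_mod hh, Nat.mod_eq_of_lt]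
    rw [pow_succ] at hh2; omega
  rw [hd, hm, Nat.div_eq_of_lt hc, Nat.mod_eq_of_lt hc]
  simp [G2]; rfl

lemma g_succ_hh {n h c : ℕ} (hh : 2 ^ n ≤ h) (hh2 : h < 2 ^ (n + 1)) (hc : c < 2 ^ n) :
    g (n + 1) h (2 ^ n + c) = g n (h - 2 ^ n) c := by
  show G2 (h / 2 ^ n) ((2 ^ n + c) / 2 ^ n) * G n (h % 2 ^ n) ((2 ^ n + c) % 2 ^ n) = _
  have hd : h / 2 ^ n = 1 := by
    apply Nat.div_eq_of_lt_le (by omega)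
    rw [pow_succ] at hh2; omega
  have hm : h % 2 ^ n = h - 2 ^ n := by
    rw [Nat.mod_eq_sub_mod hh, Nat.mod_eq_of_lt]
    rw [pow_succ] at hh2; omega
  have hd2 : (2 ^ n + c) / 2 ^ n = 1 := by
    apply Nat.div_eq_of_lt_le (by omega) (by omega)
  have hm2 : (2 ^ n + c) % 2 ^ n = c := by
    rw [add_comm, Nat.add_mod_right, Nat.mod_eq_of_lt hc]
  rw [hd, hm, hd2, hm2]
  simp [G2]; rfl

lemma wt_congr {n : ℕ} {v v' : ℕ → ZMod 2} (h : ∀ c, c < 2 ^ n → v c = v' c) :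
    wt n v = wt n v' := by
  unfold wt
  congr 1
  apply Finset.filter_congr
  intro c hc
  rw [h c (Finset.mem_range.1 hc)]

lemma wt_zero (n : ℕ) : wt n (0 : ℕ → ZMod 2) = 0 := by
  unfold wt
  simp

lemma wt_zero' (n : ℕ) : wt n (fun _ => (0 : ZMod 2)) = 0 := by
  unfold wt
  simp

lemma wt_split (n : ℕ) (v : ℕ → ZMod 2) :
    wt (n + 1) v = wt n v + wt n (fun c => v (2 ^ n + c)) := by
  unfold wt
  rw [show (2 : ℕ) ^ (n + 1) = 2 ^ n + 2 ^ n by rw [pow_succ]; omega]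
  rw [Finset.range_add, Finset.filter_union,
    Finset.card_union_of_disjoint
      (Finset.disjoint_filter_filter (Finset.disjoint_range_addLeftEmbedding _ _)),
    Finset.filter_map, Finset.card_map]
  rfl

lemma wt_triangle (n : ℕ) (u w : ℕ → ZMod 2) :
    wt n u ≤ wt n (u + w) + wt n w := by
  unfold wt
  have hsub : (Finset.range (2 ^ n)).filter (fun c => u c ≠ 0) ⊆
      (Finset.range (2 ^ n)).filter (fun c => (u + w) c ≠ 0) ∪
      (Finset.range (2 ^ n)).filter (fun c => w c ≠ 0) := by
    intro c hc
    simp only [Finset.mem_filter, Finset.mem_union, Pi.add_apply] at hc ⊢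
    by_contra hcon
    push_neg at hcon
    have h1 := hcon.1 hc.1
    have h2 := hcon.2 hc.1
    apply hc.2
    have : u c + w c = 0 := h1
    rw [h2, add_zero] at this
    exact this
  calc _ ≤ _ := Finset.card_le_card hsub
    _ ≤ _ := Finset.card_union_le _ _

lemma wt_sum_ge (n : ℕ) : ∀ (H : Finset ℕ) (hne : H.Nonempty), (∀ h ∈ H, h < 2 ^ n) →
    wt n (g n (H.min' hne)) ≤ wt n (∑ h ∈ H, g n h) := by
  induction n with
  | zero =>
    intro H hne hr
    have : H = {0} := by
      apply Finset.eq_singleton_iff_nonempty_unique_mem.2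
      exact ⟨hne, fun x hx => by have := hr x hx; omega⟩
    subst this
    simp
  | succ n ih =>
    intro H hne hr
    set i := H.min' hne with hi
    have hiH : i ∈ H := H.min'_mem hne
    set H0 := H.filter (fun h => h < 2 ^ n) with hH0
    set H1 := H.filter (fun h => ¬ h < 2 ^ n) with hH1
    set u : ℕ → ZMod 2 := ∑ h ∈ H0, g n h with hu
    set w : ℕ → ZMod 2 := ∑ h ∈ H1, g n (h - 2 ^ n) with hw
    have hlow : ∀ c, c < 2 ^ n → (∑ h ∈ H, g (n + 1) h) c = (u + w) c := by
      intro c hc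
      rw [Finset.sum_apply, ← Finset.sum_filter_add_sum_filter_not H (fun h => h < 2 ^ n)
        (fun h => g (n + 1) h c)]
      rw [Pi.add_apply, hu, hw, Finset.sum_apply, Finset.sum_apply]
      congr 1
      · apply Finset.sum_congr rfl
        intro h hh
        exact g_succ_ll (Finset.mem_filter.1 hh).2 hc
      · apply Finset.sum_congr rfl
        intro h hh
        have h1 := Finset.mem_filter.1 hh
        exact g_succ_hl (by omega) (hr h h1.1) hc
    have hhigh : ∀ c, c < 2 ^ n → (∑ h ∈ H, g (n + 1) h) (2 ^ n + c) = w c := by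
      intro c hc
      rw [Finset.sum_apply, ← Finset.sum_filter_add_sum_filter_not H (fun h => h < 2 ^ n)
        (fun h => g (n + 1) h (2 ^ n + c))]
      rw [hw, Finset.sum_apply]
      rw [Finset.sum_eq_zero (fun h hh => g_succ_lh (Finset.mem_filter.1 hh).2), zero_add]
      apply Finset.sum_congr rfl
      intro h hh
      have h1 := Finset.mem_filter.1 hh
      exact g_succ_hh (by omega) (hr h h1.1) hc
    have hwtv : wt (n + 1) (∑ h ∈ H, g (n + 1) h) = wt n (u + w) + wt n w := by
      rw [wt_split]
      congr 1
      · exact wt_congr hlow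
      · exact wt_congr (fun c hc => hhigh c hc)
    rw [hwtv]
    rcases lt_or_ge i (2 ^ n) with hilt | hige
    · -- minimum is in the low half
      have hiH0 : i ∈ H0 := Finset.mem_filter.2 ⟨hiH, hilt⟩
      have hne0 : H0.Nonempty := ⟨i, hiH0⟩
      have hmin0 : H0.min' hne0 = i := by
        apply le_antisymm (Finset.min'_le _ _ hiH0)
        apply Finset.le_min'
        intro y hy
        exact Finset.min'_le H y (Finset.mem_filter.1 hy).1
      have hIH := ih H0 hne0 (fun h hh => (Finset.mem_filter.1 hh).2)
      rw [hmin0] at hIH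
      have hwi : wt (n + 1) (g (n + 1) i) = wt n (g n i) := by
        rw [wt_split]
        rw [wt_congr (fun c hc => g_succ_ll hilt hc),
          wt_congr (fun c hc => g_succ_lh hilt (c := c))]
        rw [wt_zero', add_zero]
      rw [hwi]
      calc wt n (g n i) ≤ wt n u := hIH
        _ ≤ wt n (u + w) + wt n w := wt_triangle n u w
    · -- minimum is in the high half
      have hH0e : H0 = ∅ := by
        rw [hH0, Finset.filter_eq_empty_iff]
        intro h hh
        have := Finset.min'_le H h hh
        omega
      have hue : u = 0 := by rw [hu, hH0e, Finset.sum_empty]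
      have hH1e : H1 = H := by
        rw [hH1, Finset.filter_eq_self]
        intro h hh
        have := Finset.min'_le H h hh
        omega
      set H1' := H.image (fun h => h - 2 ^ n) with hH1'
      have hinj : Set.InjOn (fun h => h - 2 ^ n) H := by
        intro x hx y hy hxy
        have hx2 := Finset.min'_le H x hx
        have hy2 := Finset.min'_le H y hy
        simp only at hxy
        omega
      have hwsum : w = ∑ h ∈ H1', g n h := by
        rw [hw, hH1e, hH1', Finset.sum_image hinj]
      have hne' : H1'.Nonempty := hne.image _
      have hmin' : H1'.min' hne' = i - 2 ^ n := by
        apply le_antisymm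
        · exact Finset.min'_le _ _ (Finset.mem_image_of_mem _ hiH)
        · apply Finset.le_min'
          intro y hy
          rcases Finset.mem_image.1 hy with ⟨h, hh, rfl⟩
          have := Finset.min'_le H h hh
          omega
      have hIH := ih H1' hne' (fun h hh => by
        rcases Finset.mem_image.1 hh with ⟨x, hx, rfl⟩
        have h1 := hr x hx
        have h2 := Finset.min'_le H x hx
        rw [pow_succ] at h1
        omega)
      rw [hmin', ← hwsum] at hIH
      have hwi : wt (n + 1) (g (n + 1) i) = wt n (g n (i - 2 ^ n)) + wt n (g n (i - 2 ^ n)) := by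
        rw [wt_split]
        congr 1
        · exact wt_congr (fun c hc => g_succ_hl hige (hr i hiH) hc)
        · exact wt_congr (fun c hc => g_succ_hh hige (hr i hiH) hc)
      rw [hwi]
      have huw : u + w = w := by rw [hue, zero_add]
      rw [huw]
      omega

-- chunk 5 : structure of K
lemma pow_two_inj {a b : ℕ} (h : (2:ℕ) ^ a = 2 ^ b) : a = b :=
  Nat.pow_right_injective (le_refl 2) h

lemma K_struct {n i j : ℕ} (hi : i < 2 ^ n) (hj : j ∈ K n i) :
    i < j ∧ j < 2 ^ n ∧ ∃ b, b ∈ S n j ∧ b ∉ S n i ∧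
      (S n j = insert b (S n i) ∨
        ∃ a, a ∈ S n i ∧ a < b ∧ S n j = insert b (S n i \ {a})) := by
  obtain ⟨hIco, hle, heq⟩ := Finset.mem_filter.1 hj
  rw [Finset.mem_Ico] at hIco
  have hij : i < j := by omega
  have hjlt : j < 2 ^ n := hIco.2
  refine ⟨hij, hjlt, ?_⟩
  have wadd := wt_add_g hi hjlt
  rw [wt_g hi, wt_g hjlt] at *
  set si := S n i with hsi
  set sj := S n j with hsj
  set k := (si ∩ sj).card with hk
  -- heq : wt (gi+gj) = 2^|si|, hle : wt (gi+gj) ≤ 2^|sj|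
  have hsjcard : sj.card = k + 1 := by
    apply pow_two_inj
    rw [pow_succ]
    omega
  have hsicard : si.card ≤ k + 1 := by
    have h2 : (2:ℕ) ^ si.card ≤ 2 ^ (k + 1) := by rw [pow_succ]; omega
    exact (Nat.pow_le_pow_iff_right (by norm_num)).1 h2
  have hsd1 : (sj \ si).card = 1 := by
    have := Finset.card_inter_add_card_sdiff sj si
    rw [Finset.inter_comm] at this
    omega
  have hsd2 : (si \ sj).card ≤ 1 := by
    have := Finset.card_inter_add_card_sdiff si sj
    omega
  obtain ⟨b, hb⟩ := Finset.card_eq_one.1 hsd1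
  have hbmem : b ∈ sj ∧ b ∉ si := by
    have : b ∈ sj \ si := hb ▸ Finset.mem_singleton_self b
    exact Finset.mem_sdiff.1 this
  refine ⟨b, hbmem.1, hbmem.2, ?_⟩
  rcases Nat.le_one_iff_eq_zero_or_eq_one.1 hsd2 with h0 | h1
  · -- si ⊆ sj
    left
    have hss : si ⊆ sj := by
      rw [← Finset.sdiff_eq_empty_iff_subset]
      exact Finset.card_eq_zero.1 h0
    ext x
    simp only [Finset.mem_insert]
    constructor
    · intro hx
      by_cases hxs : x ∈ si
      · exact Or.inr hxs
      · left
        have : x ∈ sj \ si := Finset.mem_sdiff.2 ⟨hx, hxs⟩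
        rw [hb] at this
        exact Finset.mem_singleton.1 this
    · rintro (rfl | hx)
      · exact hbmem.1
      · exact hss hx
  · right
    obtain ⟨a, ha⟩ := Finset.card_eq_one.1 h1
    have hamem : a ∈ si ∧ a ∉ sj := by
      have : a ∈ si \ sj := ha ▸ Finset.mem_singleton_self a
      exact Finset.mem_sdiff.1 this
    have hinter : si ∩ sj = si \ {a} := by
      ext x
      simp only [Finset.mem_inter, Finset.mem_sdiff, Finset.mem_singleton]
      constructor
      · rintro ⟨h1', h2'⟩
        refine ⟨h1', fun hxa => ?_⟩
        subst hxa; exact hamem.2 h2'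
      · rintro ⟨h1', h2'⟩
        refine ⟨h1', ?_⟩
        by_contra hxs
        have : x ∈ si \ sj := Finset.mem_sdiff.2 ⟨h1', hxs⟩
        rw [ha] at this
        exact h2' (Finset.mem_singleton.1 this)
    have hsjeq : sj = insert b (si \ {a}) := by
      ext x
      simp only [Finset.mem_insert]
      constructor
      · intro hx
        by_cases hxs : x ∈ si
        · exact Or.inr (hinter ▸ Finset.mem_inter.2 ⟨hxs, hx⟩)
        · left
          have : x ∈ sj \ si := Finset.mem_sdiff.2 ⟨hx, hxs⟩
          rw [hb] at this
          exact Finset.mem_singleton.1 this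
      · rintro (rfl | hx)
        · exact hbmem.1
        · rw [← hinter] at hx
          exact (Finset.mem_inter.1 hx).2
    have hab : a < b := by
      have hii : idx si = i := idx_S hi
      have hjj : idx sj = j := idx_S hjlt
      have h1 : idx si = 2 ^ a + idx (si.erase a) :=
        (Finset.add_sum_erase si (fun x => 2 ^ x) hamem.1).symm
      have h2 : idx sj = 2 ^ b + idx (si.erase a) := by
        rw [hsjeq, Finset.sdiff_singleton_eq_erase, idx,
          Finset.sum_insert (fun hbm => hbmem.2 (Finset.mem_of_mem_erase hbm))]
        rfl
      have hpow : 2 ^ a < 2 ^ b := by omega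
      by_contra hcon
      push_neg at hcon
      have := Nat.pow_le_pow_right (show 0 < 2 by norm_num) hcon
      omega
    exact ⟨a, hamem.1, hab, hsjeq⟩

-- chunk 6 : GoodW and po construction
def GoodW (n : ℕ) (W : Finset ℕ) (m : ℕ) : Prop :=
  (S n m \ W).Nonempty ∧
    ∃ φ : ℕ → ℕ, (∀ a ∈ W \ S n m, ∀ a' ∈ W \ S n m, φ a = φ a' → a = a') ∧
      ∀ a ∈ W \ S n m, φ a ∈ S n m \ W ∧ a < φ a

lemma pow_lt_pow_two {a b : ℕ} (h : a < b) : (2:ℕ) ^ a < 2 ^ b := by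
  exact Nat.pow_lt_pow_right (by norm_num) h

lemma po_of_matching {n : ℕ} : ∀ (A : Finset ℕ) (W U' : Finset ℕ) (φ : ℕ → ℕ),
    W ⊆ Finset.range n → U' ⊆ Finset.range n → Disjoint W U' → A ⊆ W →
    (∀ a ∈ A, ∀ a' ∈ A, φ a = φ a' → a = a') →
    (∀ a ∈ A, φ a ∈ U' ∧ a < φ a) →
    po n (idx W) (idx ((W \ A) ∪ U')) := by
  intro A
  induction A using Finset.induction_on with
  | empty =>
    intro W U' φ hW hU' hdis _ _ _
    rw [Finset.sdiff_empty]
    apply Relation.ReflTransGen.single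
    refine ⟨idx_lt hW, idx_lt (Finset.union_subset hW hU'), Or.inl ?_⟩
    rw [S_idx hW, S_idx (Finset.union_subset hW hU')]
    exact Finset.subset_union_left
  | @insert a A' haA' ih =>
    intro W U' φ hW hU' hdis hAW hinj hφ
    have haW : a ∈ W := hAW (Finset.mem_insert_self a A')
    obtain ⟨hbU', hab⟩ := hφ a (Finset.mem_insert_self a A')
    set b := φ a with hbdef
    have hbW : b ∉ W := Finset.disjoint_left.1 hdis.symm hbU'
    set W1 := insert b (W \ {a}) with hW1
    have hW1r : W1 ⊆ Finset.range n := by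
      rw [hW1]
      apply Finset.insert_subset (hU' hbU')
      exact (Finset.sdiff_subset).trans hW
    have hstep : poStep n (idx W) (idx W1) := by
      refine ⟨idx_lt hW, idx_lt hW1r, Or.inr ⟨a, b, ?_, ?_, hab, ?_⟩⟩
      · rw [S_idx hW]; exact haW
      · rw [S_idx hW]; exact hbW
      · rw [S_idx hW1r, S_idx hW]
    have hA'W1 : A' ⊆ W1 := by
      intro x hx
      have hxW : x ∈ W := hAW (Finset.mem_insert_of_mem hx)
      have hxa : x ≠ a := fun h => haA' (h ▸ hx)
      rw [hW1]
      exact Finset.mem_insert_of_mem (Finset.mem_sdiff.2 ⟨hxW, by simp [hxa]⟩)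
    have hinj' : ∀ x ∈ A', ∀ y ∈ A', φ x = φ y → x = y := fun x hx y hy h =>
      hinj x (Finset.mem_insert_of_mem hx) y (Finset.mem_insert_of_mem hy) h
    have hφ' : ∀ x ∈ A', φ x ∈ U'.erase b ∧ x < φ x := by
      intro x hx
      obtain ⟨h1, h2⟩ := hφ x (Finset.mem_insert_of_mem hx)
      refine ⟨Finset.mem_erase.2 ⟨?_, h1⟩, h2⟩
      intro heq
      exact haA' (hinj x (Finset.mem_insert_of_mem hx) a (Finset.mem_insert_self a A')
        heq ▸ hx)
    have hdis' : Disjoint W1 (U'.erase b) := by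
      rw [Finset.disjoint_left]
      intro x hx hx'
      rw [hW1, Finset.mem_insert] at hx
      rcases hx with rfl | hx
      · exact (Finset.mem_erase.1 hx').1 rfl
      · exact Finset.disjoint_left.1 hdis (Finset.mem_sdiff.1 hx).1
          (Finset.mem_of_mem_erase hx')
    have hrec := ih W1 (U'.erase b) φ hW1r ((Finset.erase_subset _ _).trans hU') hdis'
      hA'W1 hinj' hφ'
    have hseteq : (W1 \ A') ∪ U'.erase b = (W \ insert a A') ∪ U' := by
      have hbA' : b ∉ A' := fun h => hbW (hAW (Finset.mem_insert_of_mem h))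
      ext x
      simp only [Finset.mem_union, Finset.mem_sdiff, Finset.mem_insert, Finset.mem_erase,
        hW1, Finset.mem_singleton]
      constructor
      · rintro (⟨(rfl | ⟨hxW, hxa⟩), hxA'⟩ | ⟨hxb, hxU'⟩)
        · exact Or.inr hbU'
        · exact Or.inl ⟨hxW, by tauto⟩
        · exact Or.inr hxU'
      · rintro (⟨hxW, hx⟩ | hxU')
        · push_neg at hx
          exact Or.inl ⟨Or.inr ⟨hxW, hx.1⟩, hx.2⟩
        · by_cases hxb : x = b
          · subst hxb
            exact Or.inl ⟨Or.inl rfl, hbA'⟩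
          · exact Or.inr ⟨hxb, hxU'⟩
    rw [hseteq] at hrec
    exact Relation.ReflTransGen.head hstep hrec

lemma Good_po {n : ℕ} {W : Finset ℕ} {m : ℕ} (hW : W ⊆ Finset.range n)
    (hm : m < 2 ^ n) (hG : GoodW n W m) : po n (idx W) m := by
  obtain ⟨hne, φ, hinj, hφ⟩ := hG
  have hseteq : (W \ (W \ S n m)) ∪ (S n m \ W) = S n m := by
    ext x
    simp only [Finset.mem_union, Finset.mem_sdiff]
    constructor
    · rintro (⟨h1, h2⟩ | ⟨h1, _⟩) <;> [skip; exact h1]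
      push_neg at h2
      exact h2 h1
    · intro hx
      by_cases hxW : x ∈ W
      · exact Or.inl ⟨hxW, fun h => h.2 hx⟩
      · exact Or.inr ⟨hx, hxW⟩
  have := po_of_matching (W \ S n m) W (S n m \ W) φ hW
    ((Finset.sdiff_subset).trans (S_subset_range n m))
    Finset.disjoint_sdiff Finset.sdiff_subset hinj hφ
  rw [hseteq, idx_S hm] at this
  exact this

lemma Good_lt {n : ℕ} {W : Finset ℕ} {m : ℕ} (hW : W ⊆ Finset.range n)
    (hm : m < 2 ^ n) (hG : GoodW n W m) : idx W < m := by
  obtain ⟨hne, φ, hinj, hφ⟩ := hG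
  set A := W \ S n m with hA
  set U' := S n m \ W with hU'
  have hWdecomp : W = (W ∩ S n m) ∪ A := by
    ext x
    simp only [Finset.mem_union, Finset.mem_inter, Finset.mem_sdiff, hA]
    tauto
  have hSdecomp : S n m = (W ∩ S n m) ∪ U' := by
    ext x
    simp only [Finset.mem_union, Finset.mem_inter, Finset.mem_sdiff, hU']
    tauto
  have hd1 : Disjoint (W ∩ S n m) A := by
    rw [Finset.disjoint_left]
    intro x hx hx'
    exact (Finset.mem_sdiff.1 hx').2 (Finset.mem_inter.1 hx).2
  have hd2 : Disjoint (W ∩ S n m) U' := by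
    rw [Finset.disjoint_left]
    intro x hx hx'
    exact (Finset.mem_sdiff.1 hx').2 (Finset.mem_inter.1 hx).1
  have h1 : idx W = idx (W ∩ S n m) + idx A := by
    conv_lhs => rw [hWdecomp]
    exact Finset.sum_union hd1
  have h2 : idx (S n m) = idx (W ∩ S n m) + idx U' := by
    conv_lhs => rw [hSdecomp]
    exact Finset.sum_union hd2
  have hAU : idx A < idx U' := by
    rcases A.eq_empty_or_nonempty with hAe | hAne
    · rw [hAe]
      have : 0 < idx U' := by
        obtain ⟨x, hx⟩ := hne
        calc 0 < 2 ^ x := pow_pos (by norm_num) x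
          _ ≤ idx U' := Finset.single_le_sum (f := fun a => 2 ^ a)
            (fun y _ => Nat.zero_le _) hx
      simpa [idx] using this
    · calc idx A < ∑ a ∈ A, 2 ^ (φ a) :=
            Finset.sum_lt_sum_of_nonempty hAne (fun a ha => pow_lt_pow_two (hφ a ha).2)
        _ = ∑ b ∈ A.image φ, 2 ^ b := by
            rw [Finset.sum_image (fun x hx y hy h => hinj x hx y hy h)]
        _ ≤ idx U' := Finset.sum_le_sum_of_subset (by
            intro x hx
            rcases Finset.mem_image.1 hx with ⟨a, ha, rfl⟩
            exact (hφ a ha).1)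
  have := idx_S hm
  omega

-- chunk 7 : the product construction
def ya (n a c : ℕ) : ZMod 2 := if a ∈ S n c then 0 else 1

def sP (n : ℕ) (P : Finset (ℕ × ℕ)) (b c : ℕ) : ZMod 2 :=
  ∑ q ∈ P.filter (fun q => q.1 = b), ya n q.2 c

def FF (n : ℕ) (W : Finset ℕ) (P : Finset (ℕ × ℕ)) : ℕ → ZMod 2 :=
  fun c => if c < 2 ^ n then ∏ b ∈ Finset.range n \ W, (ya n b c + sP n P b c) else 0

def ValidP (n : ℕ) (W : Finset ℕ) (P : Finset (ℕ × ℕ)) : Prop :=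
  ∀ q ∈ P, q.1 < n ∧ q.1 ∉ W ∧ (q.2 = n ∨ (q.2 ∈ W ∧ q.2 < q.1))

lemma ya_mul_g {n a m : ℕ} (hm : m < 2 ^ n) (c : ℕ) :
    ya n a c * g n m c = g n (idx (S n m \ {a})) c := by
  have hsub : S n m \ {a} ⊆ Finset.range n := Finset.sdiff_subset.trans (S_subset_range n m)
  have hid : idx (S n m \ {a}) < 2 ^ n := idx_lt hsub
  have hS : S n (idx (S n m \ {a})) = S n m \ {a} := S_idx hsub
  rcases lt_or_ge c (2 ^ n) with hc | hc
  · rw [g_eq hm hc, g_eq hid hc, hS, ya]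
    by_cases hac : a ∈ S n c
    · rw [if_pos hac, zero_mul]
      have : ¬ S n c ⊆ S n m \ {a} := fun h => (Finset.mem_sdiff.1 (h hac)).2 (Finset.mem_singleton_self a)
      rw [if_neg this]
    · rw [if_neg hac, one_mul]
      by_cases hsm : S n c ⊆ S n m
      · rw [if_pos hsm, if_pos]
        intro x hx
        exact Finset.mem_sdiff.2 ⟨hsm hx, fun hxa =>
          hac (Finset.mem_singleton.1 hxa ▸ hx)⟩
      · rw [if_neg hsm, if_neg (fun h => hsm (h.trans Finset.sdiff_subset))]
  · rw [g_zero_of_big hc, g_zero_of_big hc, mul_zero]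

lemma sum_g_comp {n : ℕ} {α : Type*} (Ω : Finset α) (f : α → ℕ) (Fs : Finset ℕ)
    (hf : ∀ p ∈ Ω, f p ∈ Fs) :
    ∃ M ⊆ Fs, (∑ p ∈ Ω, g n (f p)) = ∑ m ∈ M, g n m := by
  induction Ω using Finset.induction_on with
  | empty => exact ⟨∅, Finset.empty_subset _, by simp⟩
  | @insert p Ω' hp ih =>
    obtain ⟨M', hM', hsum⟩ := ih (fun x hx => hf x (Finset.mem_insert_of_mem hx))
    rw [Finset.sum_insert hp, hsum]
    by_cases hmem : f p ∈ M'
    · refine ⟨M'.erase (f p), (Finset.erase_subset _ _).trans hM', ?_⟩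
      rw [← Finset.add_sum_erase _ _ hmem, ← add_assoc, v_add_self, zero_add]
    · refine ⟨insert (f p) M', Finset.insert_subset (hf p (Finset.mem_insert_self p Ω')) hM', ?_⟩
      rw [Finset.sum_insert hmem]

lemma spn_add {n : ℕ} {Fs M1 M2 : Finset ℕ} (h1 : M1 ⊆ Fs) (h2 : M2 ⊆ Fs) :
    ∃ M ⊆ Fs, (∑ m ∈ M1, g n m) + ∑ m ∈ M2, g n m = ∑ m ∈ M, g n m := by
  refine ⟨(M1 \ M2) ∪ (M2 \ M1), ?_, (sum_symmDiff_eq M1 M2 _).symm⟩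
  apply Finset.union_subset (Finset.sdiff_subset.trans h1) (Finset.sdiff_subset.trans h2)

lemma Good_top {n : ℕ} {W : Finset ℕ} {b0 a0 : ℕ} (hW : W ⊆ Finset.range n)
    (hb0n : b0 < n) (hb0W : b0 ∉ W) (ha0 : a0 = n ∨ (a0 ∈ W ∧ a0 < b0)) :
    GoodW n W (idx ((insert b0 W) \ {a0})) := by
  set V := (insert b0 W) \ {a0} with hV
  have hVr : V ⊆ Finset.range n := by
    rw [hV]
    exact Finset.sdiff_subset.trans (Finset.insert_subset (Finset.mem_range.2 hb0n) hW)
  have hSV : S n (idx V) = V := S_idx hVr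
  have hab : a0 ≠ b0 := by
    rcases ha0 with rfl | ⟨_, h⟩
    · omega
    · omega
  have hb0V : b0 ∈ V := Finset.mem_sdiff.2 ⟨Finset.mem_insert_self _ _,
    by simp [Ne.symm hab]⟩
  constructor
  · exact ⟨b0, by rw [hSV]; exact Finset.mem_sdiff.2 ⟨hb0V, hb0W⟩⟩
  · refine ⟨fun _ => b0, ?_, ?_⟩
    · intro x hx y hy _
      rw [hSV] at hx hy
      -- W \ V ⊆ {a0}
      have hxa : x = a0 := by
        obtain ⟨hxW, hxV⟩ := Finset.mem_sdiff.1 hx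
        by_contra hne
        exact hxV (Finset.mem_sdiff.2 ⟨Finset.mem_insert_of_mem hxW, by simp [hne]⟩)
      have hya : y = a0 := by
        obtain ⟨hyW, hyV⟩ := Finset.mem_sdiff.1 hy
        by_contra hne
        exact hyV (Finset.mem_sdiff.2 ⟨Finset.mem_insert_of_mem hyW, by simp [hne]⟩)
      rw [hxa, hya]
    · intro x hx
      rw [hSV] at hx ⊢
      obtain ⟨hxW, hxV⟩ := Finset.mem_sdiff.1 hx
      have hxa : x = a0 := by
        by_contra hne
        exact hxV (Finset.mem_sdiff.2 ⟨Finset.mem_insert_of_mem hxW, by simp [hne]⟩)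
      subst hxa
      rcases ha0 with rfl | ⟨_, h⟩
      · exact absurd (hW hxW) (by simp)
      · exact ⟨Finset.mem_sdiff.2 ⟨hb0V, hb0W⟩, h⟩

lemma Good_transfer {n : ℕ} {W : Finset ℕ} {b0 a0 m : ℕ} (hW : W ⊆ Finset.range n)
    (hb0n : b0 < n) (hb0W : b0 ∉ W) (ha0 : a0 = n ∨ (a0 ∈ W ∧ a0 < b0))
    (hm : m < 2 ^ n) (hG : GoodW n (insert b0 W) m) :
    GoodW n W (idx (S n m \ {a0})) := by
  obtain ⟨hne2, φ, hinj2, hφ2⟩ := hG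
  set W1 := insert b0 W with hW1
  set V := S n m \ {a0} with hV
  have hVr : V ⊆ Finset.range n := Finset.sdiff_subset.trans (S_subset_range n m)
  have hSV : S n (idx V) = V := S_idx hVr
  have ha0nm : a0 = n → V = S n m := by
    intro h
    rw [hV, h, Finset.sdiff_singleton_eq_erase, Finset.erase_eq_of_notMem]
    intro hmem
    exact absurd (Finset.mem_range.1 (S_subset_range n m hmem)) (by omega)
  -- nonempty part
  have hVWne : (S n (idx V) \ W).Nonempty := by
    obtain ⟨x, hx⟩ := hne2
    obtain ⟨hx1, hx2⟩ := Finset.mem_sdiff.1 hx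
    refine ⟨x, ?_⟩
    rw [hSV]
    have hxa0 : x ≠ a0 := by
      rcases ha0 with ha0n | ⟨ha0W, _⟩
      · intro h
        rw [h, ha0n] at hx1
        exact absurd (Finset.mem_range.1 (S_subset_range n m hx1)) (by omega)
      · intro h; exact hx2 (h ▸ Finset.mem_insert_of_mem ha0W)
    refine Finset.mem_sdiff.2 ⟨Finset.mem_sdiff.2 ⟨hx1, by simp [hxa0]⟩, ?_⟩
    intro hxW
    exact hx2 (Finset.mem_insert_of_mem hxW)
  refine ⟨hVWne, ?_⟩
  -- the matching
  set ψ : ℕ → ℕ := fun x => if x = a0 then (if b0 ∈ S n m then b0 else φ b0) else φ x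
    with hψ
  have hdom : ∀ x, x ∈ W \ S n (idx V) → (x = a0 ∨ (x ∈ W1 \ S n m ∧ x ≠ a0)) := by
    intro x hx
    rw [hSV] at hx
    obtain ⟨hxW, hxV⟩ := Finset.mem_sdiff.1 hx
    by_cases hxa : x = a0
    · exact Or.inl hxa
    · refine Or.inr ⟨Finset.mem_sdiff.2 ⟨Finset.mem_insert_of_mem hxW, ?_⟩, hxa⟩
      intro hxm
      exact hxV (Finset.mem_sdiff.2 ⟨hxm, by simp [hxa]⟩)
  have hb0case : b0 ∉ S n m → (φ b0 ∈ S n m \ W1 ∧ b0 < φ b0) := by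
    intro hb0m
    exact hφ2 b0 (Finset.mem_sdiff.2 ⟨Finset.mem_insert_self _ _, hb0m⟩)
  have himg : ∀ x ∈ W \ S n (idx V), ψ x ∈ S n (idx V) \ W ∧ x < ψ x := by
    intro x hx
    rcases hdom x hx with hxeq | ⟨hx1, hxa⟩
    · -- x = a0 : necessarily a0 ∈ W
      have hxW : x ∈ W := (Finset.mem_sdiff.1 hx).1
      have ha0W : a0 ∈ W ∧ a0 < b0 := by
        rcases ha0 with ha0n | h
        · exfalso
          have := Finset.mem_range.1 (hW hxW)
          omega
        · exact h
      have hb0a0 : b0 ≠ a0 := by omega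
      rw [hψ]
      simp only [if_pos hxeq]
      by_cases hb0m : b0 ∈ S n m
      · rw [if_pos hb0m, hSV]
        refine ⟨Finset.mem_sdiff.2 ⟨Finset.mem_sdiff.2 ⟨hb0m, by simp [hb0a0]⟩, hb0W⟩, by omega⟩
      · rw [if_neg hb0m, hSV]
        obtain ⟨hφ1, hφ2'⟩ := hb0case hb0m
        obtain ⟨hφm, hφW1⟩ := Finset.mem_sdiff.1 hφ1
        have hφa0 : φ b0 ≠ a0 := fun h =>
          hφW1 (h ▸ Finset.mem_insert_of_mem ha0W.1)
        refine ⟨Finset.mem_sdiff.2 ⟨Finset.mem_sdiff.2 ⟨hφm, by simp [hφa0]⟩, fun hc => hφW1 (Finset.mem_insert_of_mem hc)⟩, by omega⟩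
    · -- x ≠ a0
      obtain ⟨hφ1, hφ2'⟩ := hφ2 x hx1
      obtain ⟨hφm, hφW1⟩ := Finset.mem_sdiff.1 hφ1
      rw [hψ]
      simp only [if_neg hxa, hSV]
      have hφa0 : φ x ≠ a0 := by
        rcases ha0 with ha0n | ⟨ha0W, _⟩
        · intro h
          rw [h, ha0n] at hφm
          exact absurd (Finset.mem_range.1 (S_subset_range n m hφm)) (by omega)
        · intro h
          exact hφW1 (h ▸ Finset.mem_insert_of_mem ha0W)
      refine ⟨Finset.mem_sdiff.2 ⟨Finset.mem_sdiff.2 ⟨hφm, by simp [hφa0]⟩, fun hc => hφW1 (Finset.mem_insert_of_mem hc)⟩, hφ2'⟩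
  refine ⟨ψ, ?_, himg⟩
  intro x hx y hy hxy
  rcases hdom x hx with hxeq | ⟨hx1, hxa⟩ <;> rcases hdom y hy with hyeq | ⟨hy1, hya⟩
  · rw [hxeq, hyeq]
  · -- x = a0, y ≠ a0
    exfalso
    rw [hψ] at hxy
    simp only [if_pos hxeq, if_neg hya] at hxy
    obtain ⟨hφ1, _⟩ := hφ2 y hy1
    obtain ⟨hφm, hφW1⟩ := Finset.mem_sdiff.1 hφ1
    by_cases hb0m : b0 ∈ S n m
    · rw [if_pos hb0m] at hxy
      exact hφW1 (hxy ▸ Finset.mem_insert_self _ _)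
    · rw [if_neg hb0m] at hxy
      have := hinj2 b0 (Finset.mem_sdiff.2 ⟨Finset.mem_insert_self _ _, hb0m⟩) y hy1 hxy
      obtain ⟨hyW, _⟩ := Finset.mem_sdiff.1 hy
      exact hb0W (this ▸ hyW)
  · -- x ≠ a0, y = a0 : symmetric
    exfalso
    rw [hψ] at hxy
    simp only [if_pos hyeq, if_neg hxa] at hxy
    obtain ⟨hφ1, _⟩ := hφ2 x hx1
    obtain ⟨hφm, hφW1⟩ := Finset.mem_sdiff.1 hφ1
    by_cases hb0m : b0 ∈ S n m
    · rw [if_pos hb0m] at hxy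
      exact hφW1 (hxy ▸ Finset.mem_insert_self _ _)
    · rw [if_neg hb0m] at hxy
      have := hinj2 b0 (Finset.mem_sdiff.2 ⟨Finset.mem_insert_self _ _, hb0m⟩) x hx1 hxy.symm
      obtain ⟨hxW, _⟩ := Finset.mem_sdiff.1 hx
      exact hb0W (this ▸ hxW)
  · rw [hψ] at hxy
    simp only [if_neg hxa, if_neg hya] at hxy
    exact hinj2 x hx1 y hy1 hxy

-- chunk 8 : main expansion lemma
lemma FF_empty {n : ℕ} {W : Finset ℕ} (hW : W ⊆ Finset.range n) :
    FF n W ∅ = g n (idx W) := by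
  funext c
  rw [FF]
  by_cases hc : c < 2 ^ n
  · rw [if_pos hc, g_eq (idx_lt hW) hc, S_idx hW]
    simp only [sP, Finset.filter_empty, Finset.sum_empty, add_zero]
    by_cases hss : S n c ⊆ W
    · rw [if_pos hss]
      apply Finset.prod_eq_one
      intro b hb
      rw [ya, if_neg]
      intro hbc
      exact (Finset.mem_sdiff.1 hb).2 (hss hbc)
    · rw [if_neg hss]
      obtain ⟨x, hxS, hxW⟩ := Finset.not_subset.1 hss
      apply Finset.prod_eq_zero (Finset.mem_sdiff.2 ⟨S_subset_range n c hxS, hxW⟩)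
      rw [ya, if_pos hxS]
  · rw [if_neg hc, g_zero_of_big (le_of_not_gt hc)]

lemma expandFF {n : ℕ} : ∀ (k : ℕ) (P : Finset (ℕ × ℕ)) (W : Finset ℕ), P.card ≤ k →
    W ⊆ Finset.range n → ValidP n W P →
    ∃ M ⊆ (Finset.range (2 ^ n)).filter (fun m => GoodW n W m),
      FF n W P = g n (idx W) + ∑ m ∈ M, g n m := by
  intro k
  induction k with
  | zero =>
    intro P W hcard hW _
    have : P = ∅ := Finset.card_eq_zero.1 (by omega)
    subst this
    exact ⟨∅, Finset.empty_subset _, by rw [FF_empty hW]; simp⟩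
  | succ k ih =>
    intro P W hcard hW hval
    rcases P.eq_empty_or_nonempty with rfl | hPne
    · exact ⟨∅, Finset.empty_subset _, by rw [FF_empty hW]; simp⟩
    obtain ⟨⟨b0, a0⟩, hq0⟩ := hPne
    obtain ⟨hb0n, hb0W, ha0⟩ := hval _ hq0
    set P' := P.erase (b0, a0) with hP'
    set Q := P'.filter (fun q => q.1 ≠ b0) with hQ
    set W1 := insert b0 W with hW1def
    have hW1r : W1 ⊆ Finset.range n :=
      Finset.insert_subset (Finset.mem_range.2 hb0n) hW
    have hfilter_ne : ∀ b, b ≠ b0 →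
        P.filter (fun q => q.1 = b) = P'.filter (fun q => q.1 = b) := by
      intro b hb
      ext q
      simp only [Finset.mem_filter, hP', Finset.mem_erase]
      constructor
      · rintro ⟨hq, he⟩
        refine ⟨⟨?_, hq⟩, he⟩
        intro hqe
        rw [hqe] at he
        exact hb he.symm
      · rintro ⟨⟨_, hq⟩, he⟩
        exact ⟨hq, he⟩
    have hfilter_Q : ∀ b, b ≠ b0 →
        Q.filter (fun q => q.1 = b) = P'.filter (fun q => q.1 = b) := by
      intro b hb
      ext q
      simp only [Finset.mem_filter, hQ]
      constructor
      · rintro ⟨⟨hq, _⟩, he⟩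
        exact ⟨hq, he⟩
      · rintro ⟨hq, he⟩
        exact ⟨⟨hq, by rw [he]; exact hb⟩, he⟩
    have hfilter_b0 : P.filter (fun q => q.1 = b0) =
        insert (b0, a0) (P'.filter (fun q => q.1 = b0)) := by
      ext q
      simp only [Finset.mem_filter, Finset.mem_insert, hP', Finset.mem_erase]
      constructor
      · rintro ⟨hq, he⟩
        by_cases hqe : q = (b0, a0)
        · exact Or.inl hqe
        · exact Or.inr ⟨⟨hqe, hq⟩, he⟩
      · rintro (rfl | ⟨⟨_, hq⟩, he⟩)
        · exact ⟨hq0, rfl⟩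
        · exact ⟨hq, he⟩
    have hnotmem : (b0, a0) ∉ P'.filter (fun q => q.1 = b0) := fun h =>
      (Finset.notMem_erase _ _) (Finset.mem_filter.1 h).1
    -- pointwise key identity
    have hkey : ∀ c, FF n W P c = FF n W P' c + ya n a0 c * FF n W1 Q c := by
      intro c
      by_cases hc : c < 2 ^ n
      · simp only [FF, if_pos hc]
        have hb0T : b0 ∈ Finset.range n \ W :=
          Finset.mem_sdiff.2 ⟨Finset.mem_range.2 hb0n, hb0W⟩
        have hTQ : Finset.range n \ W1 = (Finset.range n \ W).erase b0 := by
          rw [hW1def]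
          ext x
          simp only [Finset.mem_sdiff, Finset.mem_erase, Finset.mem_insert, not_or]
          tauto
        have hsb0 : sP n P b0 c = ya n a0 c + sP n P' b0 c := by
          rw [sP, sP, hfilter_b0, Finset.sum_insert hnotmem]
        have hsne : ∀ b, b ≠ b0 → sP n P b c = sP n P' b c := by
          intro b hb
          rw [sP, sP, hfilter_ne b hb]
        have hsQ : ∀ b, b ≠ b0 → sP n Q b c = sP n P' b c := by
          intro b hb
          rw [sP, sP, hfilter_Q b hb]
        rw [← Finset.mul_prod_erase _ _ hb0T,
          ← Finset.mul_prod_erase _ (fun b => ya n b c + sP n P' b c) hb0T, hTQ]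
        have hR : ∏ b ∈ (Finset.range n \ W).erase b0, (ya n b c + sP n P b c) =
            ∏ b ∈ (Finset.range n \ W).erase b0, (ya n b c + sP n Q b c) := by
          apply Finset.prod_congr rfl
          intro b hb
          rw [hsne b (Finset.ne_of_mem_erase hb), hsQ b (Finset.ne_of_mem_erase hb)]
        have hR' : ∏ b ∈ (Finset.range n \ W).erase b0, (ya n b c + sP n P' b c) =
            ∏ b ∈ (Finset.range n \ W).erase b0, (ya n b c + sP n Q b c) := by
          apply Finset.prod_congr rfl
          intro b hb
          rw [hsQ b (Finset.ne_of_mem_erase hb)]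
        rw [hR, hR', hsb0]
        ring
      · simp only [FF, if_neg hc, mul_zero, add_zero]
    have hc1 : P'.card ≤ k := by
      have h1 : P'.card = P.card - 1 := by rw [hP']; exact Finset.card_erase_of_mem hq0
      have h2 : 0 < P.card := Finset.card_pos.2 ⟨_, hq0⟩
      omega
    have hc2 : Q.card ≤ k := le_trans (Finset.card_filter_le _ _) hc1
    have hvalP' : ValidP n W P' := fun q hq => hval q (Finset.mem_of_mem_erase hq)
    have hvalQ : ValidP n W1 Q := by
      intro q hq
      obtain ⟨hq1, hq2⟩ := Finset.mem_filter.1 hq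
      obtain ⟨h1, h2, h3⟩ := hval q (Finset.mem_of_mem_erase hq1)
      refine ⟨h1, ?_, ?_⟩
      · rw [hW1def, Finset.mem_insert]
        push_neg
        exact ⟨hq2, h2⟩
      · rcases h3 with h | ⟨hh1, hh2⟩
        · exact Or.inl h
        · exact Or.inr ⟨Finset.mem_insert_of_mem hh1, hh2⟩
    obtain ⟨M1, hM1sub, hM1⟩ := ih P' W hc1 hW hvalP'
    obtain ⟨M2, hM2sub, hM2⟩ := ih Q W1 hc2 hW1r hvalQ
    set e : ℕ → ℕ := fun m => idx (S n m \ {a0}) with he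
    set mstar := idx (W1 \ {a0}) with hmstar
    have hSW1 : S n (idx W1) = W1 := S_idx hW1r
    have hmul : ∀ c, ya n a0 c * FF n W1 Q c =
        g n mstar c + ∑ m ∈ M2, g n (e m) c := by
      intro c
      rw [hM2]
      simp only [Pi.add_apply, Finset.sum_apply]
      rw [mul_add, Finset.mul_sum]
      congr 1
      · rw [ya_mul_g (idx_lt hW1r) c, hSW1]
      · apply Finset.sum_congr rfl
        intro m hm
        have hmlt : m < 2 ^ n := Finset.mem_range.1 (Finset.mem_filter.1 (hM2sub hm)).1
        exact ya_mul_g hmlt c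
    -- Good memberships
    have hGset : ∀ x ∈ M2, e x ∈ (Finset.range (2 ^ n)).filter (fun m => GoodW n W m) := by
      intro x hx
      obtain ⟨hx1, hx2⟩ := Finset.mem_filter.1 (hM2sub hx)
      refine Finset.mem_filter.2 ⟨Finset.mem_range.2 (idx_lt (Finset.sdiff_subset.trans
        (S_subset_range n x))), ?_⟩
      exact Good_transfer hW hb0n hb0W ha0 (Finset.mem_range.1 hx1) hx2
    have hGstar : mstar ∈ (Finset.range (2 ^ n)).filter (fun m => GoodW n W m) := by
      refine Finset.mem_filter.2 ⟨Finset.mem_range.2 (idx_lt (Finset.sdiff_subset.trans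
        hW1r)), ?_⟩
      rw [hmstar]
      exact Good_top hW hb0n hb0W ha0
    obtain ⟨M2', hM2'sub, hM2'⟩ := sum_g_comp (n := n) M2 e
      ((Finset.range (2 ^ n)).filter (fun m => GoodW n W m)) hGset
    have hstar_sub : {mstar} ⊆ (Finset.range (2 ^ n)).filter (fun m => GoodW n W m) :=
      Finset.singleton_subset_iff.2 hGstar
    obtain ⟨M3, hM3sub, hM3⟩ := spn_add (n := n) hstar_sub hM2'sub
    obtain ⟨M, hMsub, hM⟩ := spn_add (n := n) hM1sub hM3sub
    refine ⟨M, hMsub, ?_⟩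
    funext c
    have e1 := congrFun hM1 c
    have e2 := hmul c
    have e3 := congrFun hM2' c
    have e4 := congrFun hM3 c
    have e5 := congrFun hM c
    simp only [Pi.add_apply, Finset.sum_apply] at e1 e2 e3 e4 e5 ⊢
    rw [Finset.sum_singleton] at e4
    rw [hkey c, e1, e2, ← e5, ← e4, ← e3]
    ring

-- chunk 9 : weight and support of FF
lemma zmod2_cases : ∀ x : ZMod 2, x = 0 ∨ x = 1 := by decide

lemma sP_congr {n : ℕ} {W : Finset ℕ} {P : Finset (ℕ × ℕ)} {b c c' : ℕ}
    (hval : ValidP n W P) (h : S n c ∩ W = S n c' ∩ W) :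
    sP n P b c = sP n P b c' := by
  unfold sP
  apply Finset.sum_congr rfl
  intro q hq
  have hq2 := (hval q (Finset.mem_filter.1 hq).1).2.2
  unfold ya
  rcases hq2 with hn | ⟨hW2, _⟩
  · have h1 : q.2 ∉ S n c := fun hc => by
      have := Finset.mem_range.1 (S_subset_range n c hc); omega
    have h2 : q.2 ∉ S n c' := fun hc => by
      have := Finset.mem_range.1 (S_subset_range n c' hc); omega
    rw [if_neg h1, if_neg h2]
  · have hiff : q.2 ∈ S n c ↔ q.2 ∈ S n c' := by
      constructor
      · intro hx
        have : q.2 ∈ S n c ∩ W := Finset.mem_inter.2 ⟨hx, hW2⟩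
        rw [h] at this
        exact (Finset.mem_inter.1 this).1
      · intro hx
        have : q.2 ∈ S n c' ∩ W := Finset.mem_inter.2 ⟨hx, hW2⟩
        rw [← h] at this
        exact (Finset.mem_inter.1 this).1
    by_cases hx : q.2 ∈ S n c
    · rw [if_pos hx, if_pos (hiff.1 hx)]
    · rw [if_neg hx, if_neg (fun hc => hx (hiff.2 hc))]

lemma FF_ne_zero_iff {n : ℕ} {W : Finset ℕ} {P : Finset (ℕ × ℕ)} {c : ℕ}
    (hc : c < 2 ^ n) :
    FF n W P c ≠ 0 ↔ ∀ b ∈ Finset.range n \ W,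
      (if b ∈ S n c then (1 : ZMod 2) else 0) = sP n P b c := by
  rw [FF, if_pos hc]
  constructor
  · intro h b hb
    by_contra hcon
    apply h
    apply Finset.prod_eq_zero hb
    rcases zmod2_cases (sP n P b c) with hs | hs <;>
      rw [ya, hs] <;> by_cases hbc : b ∈ S n c <;>
      simp [hbc] at hcon ⊢ <;> tauto
  · intro h
    have h1 : ∀ b ∈ Finset.range n \ W, ya n b c + sP n P b c = 1 := by
      intro b hb
      have := h b hb
      rw [ya, ← this]
      by_cases hbc : b ∈ S n c <;> simp [hbc]
    rw [Finset.prod_congr rfl h1, Finset.prod_const_one]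
    exact one_ne_zero

lemma wt_FF {n : ℕ} {W : Finset ℕ} {P : Finset (ℕ × ℕ)}
    (hW : W ⊆ Finset.range n) (hval : ValidP n W P) :
    wt n (FF n W P) = 2 ^ W.card := by
  set p : Finset ℕ → Prop := fun U => ∀ b ∈ Finset.range n \ W,
    (if b ∈ U then (1 : ZMod 2) else 0) = sP n P b (idx (U ∩ W)) with hp
  have hincl : ∀ U, U ∩ W ⊆ Finset.range n := fun U =>
    (Finset.inter_subset_right).trans hW
  have hUc : ∀ c, c < 2 ^ n → ∀ b, sP n P b c = sP n P b (idx (S n c ∩ W)) := by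
    intro c hc b
    apply sP_congr hval
    rw [S_idx (hincl (S n c))]
    rw [Finset.inter_assoc, Finset.inter_self]
  have hwt : wt n (FF n W P) = ((Finset.range n).powerset.filter p).card := by
    apply wt_eq_card
    intro c hc
    rw [FF_ne_zero_iff hc, hp]
    constructor
    · intro h b hb
      rw [← hUc c hc b]
      exact h b hb
    · intro h b hb
      rw [hUc c hc b]
      exact h b hb
  rw [hwt, ← Finset.card_powerset]
  apply Finset.card_bij' (fun V _ => V ∩ W)
    (fun U _ => U ∪ ((Finset.range n \ W).filter (fun b => sP n P b (idx U) = 1)))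
  · intro V hV
    exact Finset.mem_powerset.2 Finset.inter_subset_right
  · -- j maps into the filtered powerset
    intro U hU
    have hUW : U ⊆ W := Finset.mem_powerset.1 hU
    have hjint : (U ∪ ((Finset.range n \ W).filter
        (fun b => sP n P b (idx U) = 1))) ∩ W = U := by
      ext x
      simp only [Finset.mem_inter, Finset.mem_union, Finset.mem_filter, Finset.mem_sdiff]
      constructor
      · rintro ⟨hx1 | hx1, hx2⟩
        · exact hx1
        · exact absurd hx2 hx1.1.2
      · intro hx
        exact ⟨Or.inl hx, hUW hx⟩
    refine Finset.mem_filter.2 ⟨Finset.mem_powerset.2 ?_, ?_⟩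
    · apply Finset.union_subset (hUW.trans hW)
      exact (Finset.filter_subset _ _).trans Finset.sdiff_subset
    · rw [hp]
      intro b hb
      rw [hjint]
      have hbU : b ∉ U := fun h => (Finset.mem_sdiff.1 hb).2 (hUW h)
      by_cases hmem : sP n P b (idx U) = 1
      · rw [hmem, if_pos]
        exact Finset.mem_union_right _ (Finset.mem_filter.2 ⟨hb, hmem⟩)
      · have h0 : sP n P b (idx U) = 0 := by
          rcases zmod2_cases (sP n P b (idx U)) with h | h
          · exact h
          · exact absurd h hmem
        rw [h0, if_neg]
        intro hcon
        rcases Finset.mem_union.1 hcon with h | h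
        · exact hbU h
        · exact hmem (Finset.mem_filter.1 h).2
  · -- j ∘ i = id on the filter set
    intro V hV
    obtain ⟨hV1, hV2⟩ := Finset.mem_filter.1 hV
    have hVr := Finset.mem_powerset.1 hV1
    ext x
    simp only [Finset.mem_union, Finset.mem_filter, Finset.mem_sdiff, Finset.mem_inter]
    constructor
    · rintro (⟨hx1, _⟩ | ⟨⟨hx1, hx2⟩, hx3⟩)
      · exact hx1
      · have := hV2 x (Finset.mem_sdiff.2 ⟨hx1, hx2⟩)
        rw [hx3] at this
        by_contra hxV
        rw [if_neg hxV] at this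
        exact one_ne_zero this.symm
    · intro hxV
      by_cases hxW : x ∈ W
      · exact Or.inl ⟨hxV, hxW⟩
      · refine Or.inr ⟨⟨hVr hxV, hxW⟩, ?_⟩
        have := hV2 x (Finset.mem_sdiff.2 ⟨hVr hxV, hxW⟩)
        rw [if_pos hxV] at this
        exact this.symm
  · -- i ∘ j = id on powerset of W
    intro U hU
    have hUW := Finset.mem_powerset.1 hU
    ext x
    simp only [Finset.mem_inter, Finset.mem_union, Finset.mem_filter, Finset.mem_sdiff]
    constructor
    · rintro ⟨hx1 | hx1, hx2⟩
      · exact hx1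
      · exact absurd hx2 hx1.1.2
    · intro hx
      exact ⟨Or.inl hx, hUW hx⟩

-- chunk 10 : injectivity of FF in P
lemma sum_symmDiff_eq' {α : Type*} [DecidableEq α] (M M' : Finset α) (f : α → ZMod 2) :
    ∑ x ∈ (M \ M') ∪ (M' \ M), f x = (∑ x ∈ M, f x) + ∑ x ∈ M', f x := by
  rw [Finset.sum_union disjoint_sdiff_sdiff]
  have h1 : ∑ x ∈ M ∩ M', f x + ∑ x ∈ M \ M', f x = ∑ x ∈ M, f x :=
    Finset.sum_inter_add_sum_sdiff M M' f
  have h2 : ∑ x ∈ M' ∩ M, f x + ∑ x ∈ M' \ M, f x = ∑ x ∈ M', f x :=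
    Finset.sum_inter_add_sum_sdiff M' M f
  rw [Finset.inter_comm] at h2
  have h3 : ∑ x ∈ M ∩ M', f x + ∑ x ∈ M ∩ M', f x = 0 := CharTwo.add_self_eq_zero _
  rw [← h1, ← h2]
  linear_combination -h3

lemma S_zero (n : ℕ) : S n 0 = ∅ := by
  ext a
  simp [mem_S, Nat.zero_testBit]

lemma FF_inj {n : ℕ} {W : Finset ℕ} {P P' : Finset (ℕ × ℕ)}
    (hW : W ⊆ Finset.range n) (hvP : ValidP n W P) (hvP' : ValidP n W P')
    (h : FF n W P = FF n W P') : P = P' := by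
  -- step 1 : the sP functions agree on points idx U, U ⊆ W
  have hs : ∀ U, U ⊆ W → ∀ b ∈ Finset.range n \ W,
      sP n P b (idx U) = sP n P' b (idx U) := by
    intro U hUW b hb
    set cstar := idx (U ∪ ((Finset.range n \ W).filter
      (fun b => sP n P b (idx U) = 1))) with hcstar
    have hsetr : (U ∪ ((Finset.range n \ W).filter
        (fun b => sP n P b (idx U) = 1))) ⊆ Finset.range n := by
      apply Finset.union_subset (hUW.trans hW)
      exact (Finset.filter_subset _ _).trans Finset.sdiff_subset
    have hclt : cstar < 2 ^ n := idx_lt hsetr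
    have hScs : S n cstar = U ∪ ((Finset.range n \ W).filter
        (fun b => sP n P b (idx U) = 1)) := S_idx hsetr
    have hinter : S n cstar ∩ W = U := by
      rw [hScs]
      ext x
      simp only [Finset.mem_inter, Finset.mem_union, Finset.mem_filter, Finset.mem_sdiff]
      constructor
      · rintro ⟨hx1 | hx1, hx2⟩
        · exact hx1
        · exact absurd hx2 hx1.1.2
      · intro hx
        exact ⟨Or.inl hx, hUW hx⟩
    have hinterU : S n (idx U) ∩ W = U := by
      rw [S_idx (hUW.trans hW)]
      exact Finset.inter_eq_left.2 hUW
    -- FF n W P cstar ≠ 0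
    have hPne : FF n W P cstar ≠ 0 := by
      rw [FF_ne_zero_iff hclt]
      intro b' hb'
      have hcongr : sP n P b' cstar = sP n P b' (idx U) :=
        sP_congr hvP (by rw [hinter, hinterU])
      rw [hcongr, hScs]
      have hb'U : b' ∉ U := fun hc => (Finset.mem_sdiff.1 hb').2 (hUW hc)
      by_cases hmem : sP n P b' (idx U) = 1
      · rw [hmem, if_pos (Finset.mem_union_right _ (Finset.mem_filter.2 ⟨hb', hmem⟩))]
      · have h0 : sP n P b' (idx U) = 0 := by
          rcases zmod2_cases (sP n P b' (idx U)) with h' | h'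
          · exact h'
          · exact absurd h' hmem
        rw [h0, if_neg]
        intro hcon
        rcases Finset.mem_union.1 hcon with h' | h'
        · exact hb'U h'
        · exact hmem (Finset.mem_filter.1 h').2
    have hP'ne : FF n W P' cstar ≠ 0 := by rw [← h]; exact hPne
    rw [FF_ne_zero_iff hclt] at hPne hP'ne
    have e1 := hPne b hb
    have e2 := hP'ne b hb
    have hcongrP : sP n P b cstar = sP n P b (idx U) :=
      sP_congr hvP (by rw [hinter, hinterU])
    have hcongrP' : sP n P' b cstar = sP n P' b (idx U) :=
      sP_congr hvP' (by rw [hinter, hinterU])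
    rw [hcongrP] at e1
    rw [hcongrP'] at e2
    rw [← e1, ← e2]
  -- step 2 : deduce equality of fibers
  have hfib : ∀ b, b ∈ Finset.range n \ W →
      P.filter (fun q => q.1 = b) = P'.filter (fun q => q.1 = b) := by
    intro b hb
    by_contra hne
    set Pb := P.filter (fun q => q.1 = b) with hPb
    set P'b := P'.filter (fun q => q.1 = b) with hP'b
    set D := (Pb \ P'b) ∪ (P'b \ Pb) with hD
    have hDne : D.Nonempty := by
      rw [Finset.nonempty_iff_ne_empty]
      intro hc
      rw [hD, Finset.union_eq_empty, Finset.sdiff_eq_empty_iff_subset,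
        Finset.sdiff_eq_empty_iff_subset] at hc
      exact hne (Finset.Subset.antisymm hc.1 hc.2)
    have hDval : ∀ q ∈ D, q.1 = b ∧ (q.2 = n ∨ (q.2 ∈ W ∧ q.2 < q.1)) := by
      intro q hq
      rcases Finset.mem_union.1 hq with h' | h'
      · obtain ⟨h1, h2⟩ := Finset.mem_filter.1 (Finset.mem_sdiff.1 h').1
        exact ⟨h2, (hvP q h1).2.2⟩
      · obtain ⟨h1, h2⟩ := Finset.mem_filter.1 (Finset.mem_sdiff.1 h').1
        exact ⟨h2, (hvP' q h1).2.2⟩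
    have hDsum : ∀ U, U ⊆ W → ∑ q ∈ D, ya n q.2 (idx U) = 0 := by
      intro U hUW
      have := hs U hUW b hb
      rw [sP, sP] at this
      have hsymm := sum_symmDiff_eq' Pb P'b (fun q => ya n q.2 (idx U))
      rw [hPb, hP'b] at hsymm
      rw [← hD] at hsymm
      rw [hsymm, this]
      exact CharTwo.add_self_eq_zero _
    -- evaluate at U = ∅
    have hempty := hDsum ∅ (Finset.empty_subset W)
    have hya0 : ∀ q ∈ D, ya n q.2 (idx (∅ : Finset ℕ)) = 1 := by
      intro q _
      rw [ya, if_neg]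
      intro hc
      rw [show idx (∅ : Finset ℕ) = 0 from rfl, S_zero] at hc
      exact absurd hc (Finset.notMem_empty _)
    rw [Finset.sum_congr rfl hya0, Finset.sum_const, nsmul_eq_mul, mul_one] at hempty
    -- so D.card is even
    have hcardeven : (D.card : ZMod 2) = 0 := hempty
    by_cases hex : ∃ q ∈ D, q.2 ≠ n
    · obtain ⟨q0, hq0D, hq0n⟩ := hex
      obtain ⟨hq0b, hq0v⟩ := hDval q0 hq0D
      have ha0W : q0.2 ∈ W := by
        rcases hq0v with h' | h'
        · exact absurd h' hq0n
        · exact h'.1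
      have hsing := hDsum {q0.2} (Finset.singleton_subset_iff.2 ha0W)
      have hSsing : S n (idx {q0.2}) = {q0.2} :=
        S_idx (Finset.singleton_subset_iff.2 (hW ha0W))
      have hvals : ∀ q ∈ D, ya n q.2 (idx {q0.2}) = if q = q0 then 0 else 1 := by
        intro q hq
        obtain ⟨hqb, _⟩ := hDval q hq
        rw [ya, hSsing]
        by_cases hqq : q = q0
        · rw [if_pos hqq, if_pos (by rw [hqq]; exact Finset.mem_singleton_self _)]
        · rw [if_neg hqq, if_neg]
          intro hc
          exact hqq (Prod.ext_iff.2 ⟨hqb.trans hq0b.symm, Finset.mem_singleton.1 hc⟩)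
      rw [Finset.sum_congr rfl hvals, ← Finset.add_sum_erase _ _ hq0D, if_pos rfl,
        zero_add] at hsing
      have hones : ∀ q ∈ D.erase q0, (if q = q0 then (0 : ZMod 2) else 1) = 1 := by
        intro q hq
        rw [if_neg (Finset.ne_of_mem_erase hq)]
      rw [Finset.sum_congr rfl hones, Finset.sum_const, nsmul_eq_mul, mul_one,
        Finset.card_erase_of_mem hq0D] at hsing
      have heven : (2 : ℕ) ∣ D.card := by
        have := (ZMod.natCast_eq_zero_iff D.card 2).1 hcardeven
        exact this
      have hodd : (2 : ℕ) ∣ (D.card - 1) := (ZMod.natCast_eq_zero_iff _ 2).1 hsing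
      have hpos : 0 < D.card := Finset.card_pos.2 hDne
      omega
    · push_neg at hex
      have hsub : D ⊆ {(b, n)} := by
        intro q hq
        obtain ⟨hqb, _⟩ := hDval q hq
        rw [Finset.mem_singleton]
        exact Prod.ext_iff.2 ⟨hqb, hex q hq⟩
      have hle : D.card ≤ 1 := by
        calc D.card ≤ ({(b, n)} : Finset (ℕ × ℕ)).card := Finset.card_le_card hsub
          _ = 1 := Finset.card_singleton _
      have heven : (2 : ℕ) ∣ D.card := (ZMod.natCast_eq_zero_iff D.card 2).1 hcardeven
      have hpos : 0 < D.card := Finset.card_pos.2 hDne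
      omega
  -- step 3 : conclude
  ext q
  constructor
  · intro hq
    have hb := hvP q hq
    have hmem : q ∈ P.filter (fun r => r.1 = q.1) := Finset.mem_filter.2 ⟨hq, rfl⟩
    rw [hfib q.1 (Finset.mem_sdiff.2 ⟨Finset.mem_range.2 hb.1, hb.2.1⟩)] at hmem
    exact (Finset.mem_filter.1 hmem).1
  · intro hq
    have hb := hvP' q hq
    have hmem : q ∈ P'.filter (fun r => r.1 = q.1) := Finset.mem_filter.2 ⟨hq, rfl⟩
    rw [← hfib q.1 (Finset.mem_sdiff.2 ⟨Finset.mem_range.2 hb.1, hb.2.1⟩)] at hmem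
    exact (Finset.mem_filter.1 hmem).1

-- chunk 11 : pairs from K, part 1
def bOf (n i j : ℕ) : ℕ := ((S n j) \ (S n i)).sum id
def aOf (n i j : ℕ) : ℕ := if S n i ⊆ S n j then n else ((S n i) \ (S n j)).sum id
def prK (n i : ℕ) (j : ℕ) : ℕ × ℕ := (bOf n i j, aOf n i j)

lemma K_data {n i j : ℕ} (hi : i < 2 ^ n) (hj : j ∈ K n i) :
    bOf n i j < n ∧ bOf n i j ∉ S n i ∧
    ((aOf n i j = n ∧ S n j = insert (bOf n i j) (S n i)) ∨
      (aOf n i j ∈ S n i ∧ aOf n i j < bOf n i j ∧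
        S n j = insert (bOf n i j) (S n i \ {aOf n i j}))) := by
  obtain ⟨hij, hjlt, b, hbSj, hbSi, hcase⟩ := K_struct hi hj
  rcases hcase with h1 | ⟨a, haSi, hab, h2⟩
  · have hsd : S n j \ S n i = {b} := by
      rw [h1]
      ext x
      simp only [Finset.mem_sdiff, Finset.mem_insert, Finset.mem_singleton]
      constructor
      · rintro ⟨hx | hx, hxn⟩
        · exact hx
        · exact absurd hx hxn
      · rintro rfl
        exact ⟨Or.inl rfl, hbSi⟩
    have hbeq : bOf n i j = b := by rw [bOf, hsd, Finset.sum_singleton]; rfl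
    have hss : S n i ⊆ S n j := by rw [h1]; exact Finset.subset_insert _ _
    have haeq : aOf n i j = n := by rw [aOf, if_pos hss]
    refine ⟨?_, ?_, Or.inl ⟨haeq, ?_⟩⟩
    · rw [hbeq]; exact Finset.mem_range.1 (S_subset_range n j hbSj)
    · rw [hbeq]; exact hbSi
    · rw [hbeq]; exact h1
  · have hsd : S n j \ S n i = {b} := by
      rw [h2]
      ext x
      simp only [Finset.mem_sdiff, Finset.mem_insert, Finset.mem_singleton]
      constructor
      · rintro ⟨hx | hx, hxn⟩
        · exact hx
        · exact absurd hx.1 hxn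
      · rintro rfl
        exact ⟨Or.inl rfl, hbSi⟩
    have hbeq : bOf n i j = b := by rw [bOf, hsd, Finset.sum_singleton]; rfl
    have hanj : a ∉ S n j := by
      rw [h2, Finset.mem_insert]
      push_neg
      constructor
      · omega
      · intro hc
        exact (Finset.mem_sdiff.1 hc).2 (Finset.mem_singleton_self a)
    have hnss : ¬ S n i ⊆ S n j := fun h => hanj (h haSi)
    have hsd2 : S n i \ S n j = {a} := by
      rw [h2]
      ext x
      simp only [Finset.mem_sdiff, Finset.mem_insert, Finset.mem_singleton, not_or]
      constructor
      · rintro ⟨hxi, hxb, hxm⟩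
        by_contra hxa
        exact hxm ⟨hxi, hxa⟩
      · rintro rfl
        exact ⟨haSi, by omega, fun hc => hc.2 rfl⟩
    have haeq : aOf n i j = a := by
      rw [aOf, if_neg hnss, hsd2, Finset.sum_singleton]; rfl
    refine ⟨?_, ?_, Or.inr ⟨?_, ?_, ?_⟩⟩
    · rw [hbeq]; exact Finset.mem_range.1 (S_subset_range n j hbSj)
    · rw [hbeq]; exact hbSi
    · rw [haeq]; exact haSi
    · rw [haeq, hbeq]; exact hab
    · rw [haeq, hbeq]; exact h2

lemma prK_inj {n i : ℕ} (hi : i < 2 ^ n) {j j' : ℕ} (hj : j ∈ K n i) (hj' : j' ∈ K n i)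
    (h : prK n i j = prK n i j') : j = j' := by
  obtain ⟨_, _, hc⟩ := K_data hi hj
  obtain ⟨_, _, hc'⟩ := K_data hi hj'
  have hb : bOf n i j = bOf n i j' := congrArg Prod.fst h
  have ha : aOf n i j = aOf n i j' := congrArg Prod.snd h
  have hjlt : j < 2 ^ n := (K_struct hi hj).2.1
  have hj'lt : j' < 2 ^ n := (K_struct hi hj').2.1
  have hSeq : S n j = S n j' := by
    rcases hc with ⟨ha1, hS1⟩ | ⟨ha1, _, hS1⟩ <;> rcases hc' with ⟨ha2, hS2⟩ | ⟨ha2, _, hS2⟩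
    · rw [hS1, hS2, hb]
    · exfalso
      have : aOf n i j' < n := Finset.mem_range.1 (S_subset_range n i ha2)
      omega
    · exfalso
      have : aOf n i j < n := Finset.mem_range.1 (S_subset_range n i ha1)
      omega
    · rw [hS1, hS2, hb, ha]
  have := congrArg idx hSeq
  rw [idx_S hjlt, idx_S hj'lt] at this
  exact this

set_option maxHeartbeats 2000000 in
lemma part1 {n : ℕ} {I : Finset ℕ} (hIr : ∀ x ∈ I, x < 2 ^ n) (hPOP : POP n I)
    {i : ℕ} (hiI : i ∈ I) :
    2 ^ (K n i).card ≤ Ai n I i (wt n (g n i)) := by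
  have hi : i < 2 ^ n := hIr i hiI
  set W := S n i with hWdef
  have hW : W ⊆ Finset.range n := S_subset_range n i
  have hidxW : idx W = i := idx_S hi
  have hvalid : ∀ H : Finset ℕ, H ⊆ K n i → ValidP n W (H.image (prK n i)) := by
    intro H hH q hq
    obtain ⟨j, hjH, rfl⟩ := Finset.mem_image.1 hq
    obtain ⟨h1, h2, h3⟩ := K_data hi (hH hjH)
    refine ⟨h1, h2, ?_⟩
    rcases h3 with ⟨ha, _⟩ | ⟨ha, hab, _⟩
    · exact Or.inl ha
    · exact Or.inr ⟨ha, hab⟩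
  have hmaps : ∀ H : Finset ℕ, H ⊆ K n i →
      FF n W (H.image (prK n i)) ∈
        (coset n I i).filter (fun v => wt n v = wt n (g n i)) := by
    intro H hH
    obtain ⟨M, hMsub, hMeq⟩ := expandFF (H.image (prK n i)).card (H.image (prK n i)) W
      le_rfl hW (hvalid H hH)
    have hMsub' : M ⊆ I.filter (fun h => i < h) := by
      intro m hm
      obtain ⟨hm1, hm2⟩ := Finset.mem_filter.1 (hMsub hm)
      have hmlt := Finset.mem_range.1 hm1
      have hpo : po n i m := by
        have := Good_po hW hmlt hm2
        rw [hidxW] at this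
        exact this
      have hlt : i < m := by
        have := Good_lt hW hmlt hm2
        rw [hidxW] at this
        exact this
      exact Finset.mem_filter.2 ⟨hPOP i hiI m hmlt hpo, hlt⟩
    refine Finset.mem_filter.2 ⟨?_, ?_⟩
    · rw [coset]
      apply Finset.mem_image.2
      refine ⟨M, Finset.mem_powerset.2 hMsub', ?_⟩
      rw [hMeq, hidxW]
    · rw [wt_FF hW (hvalid H hH), wt_g hi]
  have hinj : ∀ H ∈ (K n i).powerset, ∀ H' ∈ (K n i).powerset,
      FF n W (H.image (prK n i)) = FF n W (H'.image (prK n i)) → H = H' := by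
    intro H hH H' hH' heq
    have hHs := Finset.mem_powerset.1 hH
    have hH's := Finset.mem_powerset.1 hH'
    have hPeq := FF_inj hW (hvalid H hHs) (hvalid H' hH's) heq
    ext j
    constructor
    · intro hjH
      have : prK n i j ∈ H'.image (prK n i) := by
        rw [← hPeq]
        exact Finset.mem_image_of_mem _ hjH
      obtain ⟨j', hj', hjj'⟩ := Finset.mem_image.1 this
      rwa [← prK_inj hi (hH's hj') (hHs hjH) hjj']
    · intro hjH
      have : prK n i j ∈ H.image (prK n i) := by
        rw [hPeq]
        exact Finset.mem_image_of_mem _ hjH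
      obtain ⟨j', hj', hjj'⟩ := Finset.mem_image.1 this
      rwa [← prK_inj hi (hHs hj') (hH's hjH) hjj']
  have hcard : (K n i).powerset.card ≤
      ((coset n I i).filter (fun v => wt n v = wt n (g n i))).card := by
    apply Finset.card_le_card_of_injOn (fun H => FF n W (H.image (prK n i)))
    · intro H hH
      exact hmaps H (Finset.mem_powerset.1 hH)
    · intro H hH H' hH' heq
      exact hinj H hH H' hH' heq
  rw [Finset.card_powerset] at hcard
  exact hcard


/-- if I satisfies POP and B = {i ∈ I : w(g_i) = w_min}, then
A_{i,w_min}(I) ≥ 2^{|K_i|} for every i ∈ B, and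
A_{w_min}(I) = Σ_{i∈B} A_{i,w_min}(I) ≥ Σ_{i∈B} 2^{|K_i|}. -/
theorem Ai_lower_bound (n : ℕ) (hn : 1 ≤ n) (I : Finset ℕ) (hI : I.Nonempty)
    (hIr : ∀ x ∈ I, x < 2 ^ n) (hPOP : POP n I)
    (wmin : ℕ) (hw : wmin = I.inf' hI fun x => wt n (g n x))
    (B : Finset ℕ) (hB : B = I.filter fun x => wt n (g n x) = wmin) :
    (∀ i ∈ B, 2 ^ (K n i).card ≤ Ai n I i wmin) ∧
    A n I wmin = ∑ i ∈ B, Ai n I i wmin ∧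
    ∑ i ∈ B, 2 ^ (K n i).card ≤ A n I wmin := by
  have hwpos : 0 < wmin := by
    obtain ⟨i0, hi0, he⟩ := Finset.exists_mem_eq_inf' hI (fun x => wt n (g n x))
    rw [hw, he, wt_g (hIr i0 hi0)]
    exact pow_pos (by norm_num) _
  have hpartA : ∀ i ∈ B, 2 ^ (K n i).card ≤ Ai n I i wmin := by
    intro i hiB
    obtain ⟨hiI, hwti⟩ := Finset.mem_filter.1 (hB ▸ hiB)
    rw [← hwti]
    exact part1 hIr hPOP hiI
  have hdisj : ∀ i ∈ B, ∀ i' ∈ B, i ≠ i' →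
      Disjoint ((coset n I i).filter (fun v => wt n v = wmin))
        ((coset n I i').filter (fun v => wt n v = wmin)) := by
    intro i hiB i' hi'B hne
    obtain ⟨hiI, _⟩ := Finset.mem_filter.1 (hB ▸ hiB)
    obtain ⟨hi'I, _⟩ := Finset.mem_filter.1 (hB ▸ hi'B)
    rw [Finset.disjoint_left]
    intro v hv hv'
    obtain ⟨H1, hH1, he1⟩ := Finset.mem_image.1 (Finset.mem_filter.1 hv).1
    obtain ⟨H2, hH2, he2⟩ := Finset.mem_image.1 (Finset.mem_filter.1 hv').1
    rw [Finset.mem_powerset] at hH1 hH2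
    have hiH1 : i ∉ H1 := fun h => lt_irrefl i (Finset.mem_filter.1 (hH1 h)).2
    have hi'H2 : i' ∉ H2 := fun h => lt_irrefl i' (Finset.mem_filter.1 (hH2 h)).2
    have hv1 : v = ∑ h ∈ insert i H1, g n h := by
      rw [Finset.sum_insert hiH1, ← he1]
    have hv2 : v = ∑ h ∈ insert i' H2, g n h := by
      rw [Finset.sum_insert hi'H2, ← he2]
    have hr1 : ∀ x ∈ insert i H1, x < 2 ^ n := by
      intro x hx
      rcases Finset.mem_insert.1 hx with rfl | hx'
      · exact hIr x hiI
      · exact hIr x (Finset.mem_filter.1 (hH1 hx')).1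
    have hr2 : ∀ x ∈ insert i' H2, x < 2 ^ n := by
      intro x hx
      rcases Finset.mem_insert.1 hx with rfl | hx'
      · exact hIr x hi'I
      · exact hIr x (Finset.mem_filter.1 (hH2 hx')).1
    have hseteq : insert i H1 = insert i' H2 :=
      sum_g_inj hr1 hr2 (by rw [← hv1, ← hv2])
    have h1 : i ∈ insert i' H2 := hseteq ▸ Finset.mem_insert_self i H1
    have h2 : i' ∈ insert i H1 := hseteq ▸ Finset.mem_insert_self i' H2
    rcases Finset.mem_insert.1 h1 with h | h
    · exact hne h
    · have hii' : i' < i := (Finset.mem_filter.1 (hH2 h)).2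
      rcases Finset.mem_insert.1 h2 with h' | h'
      · exact hne h'.symm
      · exact absurd (Finset.mem_filter.1 (hH1 h')).2 (by omega)
  have hpart : (codewords n I).filter (fun v => wt n v = wmin) =
      B.biUnion (fun i => (coset n I i).filter (fun v => wt n v = wmin)) := by
    ext v
    constructor
    · intro hv
      obtain ⟨hv1, hv2⟩ := Finset.mem_filter.1 hv
      obtain ⟨H, hHmem, heq⟩ := Finset.mem_image.1 hv1
      have hHsub : H ⊆ I := Finset.mem_powerset.1 hHmem
      have hHne : H.Nonempty := by
        rcases H.eq_empty_or_nonempty with rfl | h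
        · exfalso
          rw [← heq] at hv2
          rw [Finset.sum_empty] at hv2
          rw [wt_zero] at hv2
          omega
        · exact h
      set i := H.min' hHne with hidef
      have hiH : i ∈ H := H.min'_mem hHne
      have hiI : i ∈ I := hHsub hiH
      have hge : wt n (g n i) ≤ wt n v := by
        rw [← heq]
        exact wt_sum_ge n H hHne (fun h hh => hIr h (hHsub hh))
      have hle : wmin ≤ wt n (g n i) := by
        rw [hw]
        exact Finset.inf'_le _ hiI
      have hwti : wt n (g n i) = wmin := by omega
      have hiB : i ∈ B := by
        rw [hB]
        exact Finset.mem_filter.2 ⟨hiI, hwti⟩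
      apply Finset.mem_biUnion.2
      refine ⟨i, hiB, Finset.mem_filter.2 ⟨?_, hv2⟩⟩
      rw [coset]
      apply Finset.mem_image.2
      refine ⟨H.erase i, Finset.mem_powerset.2 ?_, ?_⟩
      · intro h hh
        refine Finset.mem_filter.2 ⟨hHsub (Finset.mem_of_mem_erase hh), ?_⟩
        have h1 := Finset.min'_le H h (Finset.mem_of_mem_erase hh)
        have h2 := Finset.ne_of_mem_erase hh
        omega
      · rw [← heq, ← Finset.add_sum_erase _ _ hiH]
    · intro hv
      obtain ⟨i, hiB, hvmem⟩ := Finset.mem_biUnion.1 hv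
      obtain ⟨hiI, _⟩ := Finset.mem_filter.1 (hB ▸ hiB)
      obtain ⟨hv1, hv2⟩ := Finset.mem_filter.1 hvmem
      obtain ⟨H, hHmem, heq⟩ := Finset.mem_image.1 hv1
      rw [Finset.mem_powerset] at hHmem
      have hiH : i ∉ H := fun h => lt_irrefl i (Finset.mem_filter.1 (hHmem h)).2
      refine Finset.mem_filter.2 ⟨?_, hv2⟩
      rw [codewords]
      apply Finset.mem_image.2
      refine ⟨insert i H, Finset.mem_powerset.2 ?_, ?_⟩
      · apply Finset.insert_subset hiI
        exact hHmem.trans (Finset.filter_subset _ _)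
      · rw [Finset.sum_insert hiH, ← heq]
  have hpartB : A n I wmin = ∑ i ∈ B, Ai n I i wmin := by
    rw [A, hpart, Finset.card_biUnion hdisj]
    rfl
  refine ⟨hpartA, hpartB, ?_⟩
  rw [hpartB]
  exact Finset.sum_le_sum hpartA
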